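/- arXiv:1601.06263 — 3 statements merged into one kernel-verified Lean document; each statement's English description precedes it below -/
import Mathlib

section
/- Suppose f¹, f² : Q×ℝⁿ→ℝⁿ satisfy |f¹(x,y,z)|, |f²(x,y,z)| ≤ B|z| + b(x,y) with B>0, b ∈ L²(Q,ℝ₊), and A¹, A² : Q→ℝ^{n×n} are measurable and bounded by B. Then the operator F : AC₀²(Q,ℝⁿ) → L²(Q,ℝⁿ) defined by F(z)(x,y) = z_{xy}(x,y) + f¹(x,y,z(x,y)) + ∫₀ˣ∫₀ʸ (f²(s,t,z(s,t)) + A¹(s,t)z_x(s,t) + A²(s,t)z_y(s,t)) ds dt is coercive in norm: ‖F(z)‖_{L²} → ∞ as ‖z‖_{AC₀²} → ∞; indeed, for any m > 8B, ‖F(z)‖_{L²_m} ≥ (1 − 8B/m)‖z‖_{AC₀²,m} − 2‖b‖_{L²_m}. -/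
open MeasureTheory Set Real
open scoped ENNReal

/-- The unit square `Q = [0,1] × [0,1]`. -/
def Q : Set (ℝ × ℝ) := Icc (0:ℝ) 1 ×ˢ Icc (0:ℝ) 1

/-- Weighted (Bielecki) L²-type norm with weight `e^{-m(x+y)}` on the unit square. -/
noncomputable def wnorm {n : ℕ} (m : ℝ) (v : ℝ → ℝ → EuclideanSpace ℝ (Fin n)) : ℝ :=
  (∫ x in (0:ℝ)..1, ∫ y in (0:ℝ)..1, Real.exp (-m * (x + y)) * ‖v x y‖ ^ 2) ^ ((1:ℝ)/2)

/-- Weighted (Bielecki) L²-type norm for scalar functions on the unit square. -/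
noncomputable def wnormR (m : ℝ) (v : ℝ → ℝ → ℝ) : ℝ :=
  (∫ x in (0:ℝ)..1, ∫ y in (0:ℝ)..1, Real.exp (-m * (x + y)) * |v x y| ^ 2) ^ ((1:ℝ)/2)

/-- The operator `F` of (3.6), written in terms of the mixed derivative `l = z_{xy}`
of `z ∈ AC₀²(Q,ℝⁿ)`: here `z(x,y) = ∫₀ˣ∫₀ʸ l`, `z_x(s,t) = ∫₀ᵗ l(s,·)`,
`z_y(s,t) = ∫₀ˢ l(·,t)`. -/
noncomputable def Fop {n : ℕ}
    (f1 f2 : ℝ → ℝ → EuclideanSpace ℝ (Fin n) → EuclideanSpace ℝ (Fin n))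
    (A1 A2 : ℝ → ℝ → (EuclideanSpace ℝ (Fin n) →L[ℝ] EuclideanSpace ℝ (Fin n)))
    (l : ℝ → ℝ → EuclideanSpace ℝ (Fin n)) (x y : ℝ) : EuclideanSpace ℝ (Fin n) :=
  l x y + f1 x y (∫ s in (0:ℝ)..x, ∫ t in (0:ℝ)..y, l s t) +
    ∫ s in (0:ℝ)..x, ∫ t in (0:ℝ)..y,
      (f2 s t (∫ σ in (0:ℝ)..s, ∫ τ in (0:ℝ)..t, l σ τ)
        + A1 s t (∫ τ in (0:ℝ)..t, l s τ) + A2 s t (∫ σ in (0:ℝ)..s, l σ t))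

noncomputable section Aux

/-- open unit square (a.e. version of Q) -/
def usq : Set (ℝ × ℝ) := Ioc (0:ℝ) 1 ×ˢ Ioc (0:ℝ) 1

lemma usq_meas : MeasurableSet usq := (measurableSet_Ioc).prod measurableSet_Ioc

def wt (m : ℝ) (p : ℝ × ℝ) : ℝ≥0∞ := ENNReal.ofReal (Real.exp (-m * (p.1 + p.2)))

lemma wt_meas (m : ℝ) : Measurable (wt m) :=
  ENNReal.measurable_ofReal.comp (Real.continuous_exp.comp (by continuity)).measurable

def LL {F : Type*} [NormedAddCommGroup F] (m : ℝ) (v : ℝ × ℝ → F) : ℝ≥0∞ :=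
  ∫⁻ p in usq, wt m p * (‖v p‖₊ : ℝ≥0∞) ^ 2

def NN {F : Type*} [NormedAddCommGroup F] (m : ℝ) (v : ℝ × ℝ → F) : ℝ≥0∞ :=
  (LL m v) ^ ((1:ℝ)/2)

/-- the auxiliary scalar function whose square integrates to LL -/
def af {F : Type*} [NormedAddCommGroup F] (m : ℝ) (v : ℝ × ℝ → F) (p : ℝ × ℝ) : ℝ≥0∞ :=
  ENNReal.ofReal (Real.exp (-m * (p.1 + p.2) / 2)) * (‖v p‖₊ : ℝ≥0∞)

lemma af_sq {F : Type*} [NormedAddCommGroup F] (m : ℝ) (v : ℝ × ℝ → F) (p : ℝ × ℝ) :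
    af m v p ^ (2:ℝ) = wt m p * (‖v p‖₊ : ℝ≥0∞) ^ 2 := by
  rw [af, show ((2:ℝ)) = ((2:ℕ) : ℝ) by norm_num, ENNReal.rpow_natCast, mul_pow,
    ← ENNReal.ofReal_pow (Real.exp_pos _).le]
  congr 2
  rw [pow_two, ← Real.exp_add]
  ring_nf

lemma af_meas {F : Type*} [NormedAddCommGroup F] (m : ℝ) {v : ℝ × ℝ → F} {μ : Measure (ℝ×ℝ)}
    (hv : AEStronglyMeasurable v μ) : AEMeasurable (af m v) μ := by
  refine AEMeasurable.mul ?_ hv.enorm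
  exact (ENNReal.measurable_ofReal.comp
    ((Real.continuous_exp.comp (by continuity)).measurable)).aemeasurable

lemma LL_eq_af {F : Type*} [NormedAddCommGroup F] (m : ℝ) (v : ℝ × ℝ → F) :
    LL m v = ∫⁻ p in usq, (af m v p) ^ (2:ℝ) := by
  rw [LL]; apply lintegral_congr; intro p; rw [af_sq]

lemma NN_add_le {F : Type*} [NormedAddCommGroup F] (m : ℝ) {u v : ℝ × ℝ → F}
    (hu : AEStronglyMeasurable u (volume.restrict usq))
    (hv : AEStronglyMeasurable v (volume.restrict usq)) :
    NN m (u + v) ≤ NN m u + NN m v := by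
  have h2 : ∀ p, af m (u + v) p ≤ (af m u + af m v) p := by
    intro p
    simp only [af, Pi.add_apply, ← mul_add]
    gcongr
    rw [← ENNReal.coe_add]
    exact_mod_cast nnnorm_add_le _ _
  calc NN m (u+v) = (∫⁻ p in usq, (af m (u+v) p) ^ (2:ℝ)) ^ ((1:ℝ)/2) := by rw [NN, LL_eq_af]
    _ ≤ (∫⁻ p in usq, ((af m u + af m v) p) ^ (2:ℝ)) ^ ((1:ℝ)/2) := by
        gcongr
        exact h2 _
    _ ≤ (∫⁻ p in usq, (af m u p) ^ (2:ℝ)) ^ ((1:ℝ)/2)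
          + (∫⁻ p in usq, (af m v p) ^ (2:ℝ)) ^ ((1:ℝ)/2) :=
        ENNReal.lintegral_Lp_add_le (af_meas m hu) (af_meas m hv) one_le_two
    _ = NN m u + NN m v := by rw [NN, NN, LL_eq_af, LL_eq_af]

lemma NN_mono {F G : Type*} [NormedAddCommGroup F] [NormedAddCommGroup G] (m : ℝ)
    {u : ℝ × ℝ → F} {v : ℝ × ℝ → G}
    (h : ∀ᵐ p ∂(volume.restrict usq), ‖u p‖ ≤ ‖v p‖) : NN m u ≤ NN m v := by
  rw [NN, NN]
  gcongr
  rw [LL, LL]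
  refine lintegral_mono_ae ?_
  filter_upwards [h] with p hp
  gcongr
  exact_mod_cast hp

lemma NN_congr {F : Type*} [NormedAddCommGroup F] (m : ℝ) {u v : ℝ × ℝ → F}
    (h : u =ᶠ[ae (volume.restrict usq)] v) : NN m u = NN m v := by
  apply le_antisymm <;> apply NN_mono <;> [skip; exact h.symm.mono fun p hp => by rw [hp]] <;>
    exact h.mono fun p hp => by rw [hp]

lemma NN_neg {F : Type*} [NormedAddCommGroup F] (m : ℝ) (u : ℝ × ℝ → F) :
    NN m (-u) = NN m u := by
  apply le_antisymm <;> apply NN_mono <;> filter_upwards with p <;> simp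

lemma NN_norm_eq {F : Type*} [NormedAddCommGroup F] (m : ℝ) (u : ℝ × ℝ → F) :
    NN m (fun p => ‖u p‖) = NN m u := by
  apply le_antisymm <;> apply NN_mono <;> filter_upwards with p <;> simp

lemma NN_const_mul (m : ℝ) {c : ℝ} (hc : 0 ≤ c) (g : ℝ × ℝ → ℝ) :
    NN m (fun p => c * g p) = ENNReal.ofReal c * NN m g := by
  have hLL : LL m (fun p => c * g p) = (ENNReal.ofReal c) ^ 2 * LL m g := by
    rw [LL, LL, ← lintegral_const_mul' _ _ (ENNReal.pow_ne_top ENNReal.ofReal_ne_top)]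
    apply lintegral_congr
    intro p
    have : (‖c * g p‖₊ : ℝ≥0∞) = ENNReal.ofReal c * ‖g p‖₊ := by
      rw [← enorm_eq_nnnorm, ← enorm_eq_nnnorm, ← ofReal_norm, ← ofReal_norm, norm_mul,
        Real.norm_eq_abs c, abs_of_nonneg hc, ENNReal.ofReal_mul hc]
    rw [this]
    ring
  rw [NN, NN, hLL, ENNReal.mul_rpow_of_nonneg _ _ (by norm_num), ← ENNReal.rpow_natCast _ 2,
    ← ENNReal.rpow_mul]
  norm_num

/-- weight is at most 1 on the square (m ≥ 0) -/
lemma wt_le_one {m : ℝ} (hm : 0 ≤ m) {p : ℝ × ℝ} (hp : p ∈ usq) : wt m p ≤ 1 := by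
  rw [wt, show (1:ℝ≥0∞) = ENNReal.ofReal 1 by simp]
  apply ENNReal.ofReal_le_ofReal
  rw [← Real.exp_zero]
  apply Real.exp_le_exp.2
  obtain ⟨h1, h2⟩ := hp
  nlinarith [h1.1, h2.1]

lemma LL_lt_top_of_memℒp {F : Type*} [NormedAddCommGroup F] {m : ℝ} (hm : 0 ≤ m)
    {v : ℝ × ℝ → F} (hv : MemLp v 2 (volume.restrict Q)) : LL m v < ⊤ := by
  have hsub : usq ⊆ Q := by
    rintro ⟨x, y⟩ ⟨hx, hy⟩
    exact ⟨⟨hx.1.le, hx.2⟩, ⟨hy.1.le, hy.2⟩⟩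
  have h1 : LL m v ≤ ∫⁻ p in Q, (‖v p‖₊ : ℝ≥0∞) ^ 2 := by
    refine le_trans ?_ (lintegral_mono_set hsub)
    rw [LL]
    refine lintegral_mono_ae ?_
    filter_upwards [ae_restrict_mem usq_meas] with p hp
    calc wt m p * (‖v p‖₊ : ℝ≥0∞) ^ 2 ≤ 1 * (‖v p‖₊ : ℝ≥0∞) ^ 2 := by gcongr; exact wt_le_one hm hp
      _ = _ := one_mul _
  refine h1.trans_lt ?_
  have h2 := hv.eLpNorm_lt_top
  rw [eLpNorm_eq_lintegral_rpow_enorm_toReal (by norm_num) (by norm_num)] at h2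
  by_contra hcon
  push_neg at hcon
  have htop : ∫⁻ p in Q, (‖v p‖₊ : ℝ≥0∞) ^ 2 = ⊤ := top_le_iff.mp hcon
  rw [show ((2:ℝ≥0∞).toReal) = ((2:ℕ):ℝ) by norm_num] at h2
  simp_rw [ENNReal.rpow_natCast] at h2
  rw [show (∫⁻ (x : ℝ × ℝ) in Q, ‖v x‖ₑ ^ 2) = ⊤ from htop] at h2
  simp at h2

lemma measurable_ofReal_exp (c d : ℝ) : Measurable fun τ : ℝ => ENNReal.ofReal (Real.exp (c * τ / d)) :=
  ENNReal.measurable_ofReal.comp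
    (Real.continuous_exp.comp ((continuous_const.mul continuous_id).div_const d)).measurable

lemma integral_exp_mul {m : ℝ} (hm : m ≠ 0) (y : ℝ) :
    ∫ τ in (0:ℝ)..y, Real.exp (m * τ) = (Real.exp (m * y) - 1) / m := by
  have h := intervalIntegral.integral_comp_mul_left (a := (0:ℝ)) (b := y)
    (fun x => Real.exp x) (c := m)
  simp only [mul_zero] at h
  rw [h hm, integral_exp, Real.exp_zero, smul_eq_mul, inv_mul_eq_div]

lemma oneD {F : Type*} [NormedAddCommGroup F] [NormedSpace ℝ F] {m : ℝ} (hm : 0 < m)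
    (r : ℝ → F) (hr : AEMeasurable (fun τ => (‖r τ‖₊ : ℝ≥0∞)) (volume.restrict (Ioc (0:ℝ) 1))) :
    ∫⁻ y in Ioc (0:ℝ) 1, ENNReal.ofReal (Real.exp (-m*y)) * (‖∫ τ in (0:ℝ)..y, r τ‖₊ : ℝ≥0∞) ^ 2
      ≤ ENNReal.ofReal (min (1/m) (1/2)) *
        ∫⁻ τ in Ioc (0:ℝ) 1, ENNReal.ofReal (Real.exp (-m*τ)) * (‖r τ‖₊ : ℝ≥0∞) ^ 2 := by
  set R := ∫⁻ τ in Ioc (0:ℝ) 1, ENNReal.ofReal (Real.exp (-m*τ)) * (‖r τ‖₊ : ℝ≥0∞) ^ 2 with hR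
  have key : ∀ y ∈ Ioc (0:ℝ) 1,
      ENNReal.ofReal (Real.exp (-m*y)) * (‖∫ τ in (0:ℝ)..y, r τ‖₊ : ℝ≥0∞) ^ 2
        ≤ ENNReal.ofReal (min (1/m) y) * R := by
    intro y hy
    have hy0 : (0:ℝ) ≤ y := hy.1.le
    have s1 : (‖∫ τ in (0:ℝ)..y, r τ‖₊ : ℝ≥0∞) ≤ ∫⁻ τ in Ioc (0:ℝ) y, (‖r τ‖₊ : ℝ≥0∞) := by
      rw [intervalIntegral.integral_of_le hy0]
      exact enorm_integral_le_lintegral_enorm _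
    set f : ℝ → ℝ≥0∞ := fun τ => ENNReal.ofReal (Real.exp (m*τ/2)) with hf
    set g : ℝ → ℝ≥0∞ := fun τ => ENNReal.ofReal (Real.exp (-m*τ/2)) * (‖r τ‖₊ : ℝ≥0∞) with hg
    have hfg : ∀ τ, (‖r τ‖₊ : ℝ≥0∞) = (f * g) τ := by
      intro τ
      simp only [hf, hg, Pi.mul_apply, ← mul_assoc, ← ENNReal.ofReal_mul (Real.exp_pos _).le,
        ← Real.exp_add]
      rw [show m*τ/2 + -m*τ/2 = 0 by ring, Real.exp_zero, ENNReal.ofReal_one, one_mul]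
    have hmf : AEMeasurable f (volume.restrict (Ioc (0:ℝ) y)) :=
      (measurable_ofReal_exp m 2).aemeasurable
    have hmg : AEMeasurable g (volume.restrict (Ioc (0:ℝ) y)) := by
      refine AEMeasurable.mul (measurable_ofReal_exp (-m) 2).aemeasurable ?_
      exact hr.mono_measure (Measure.restrict_mono (Ioc_subset_Ioc le_rfl hy.2) le_rfl)
    have cs : ∫⁻ τ in Ioc (0:ℝ) y, (‖r τ‖₊ : ℝ≥0∞)
        ≤ (∫⁻ τ in Ioc (0:ℝ) y, f τ ^ (2:ℝ)) ^ ((1:ℝ)/2)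
          * (∫⁻ τ in Ioc (0:ℝ) y, g τ ^ (2:ℝ)) ^ ((1:ℝ)/2) := by
      calc ∫⁻ τ in Ioc (0:ℝ) y, (‖r τ‖₊ : ℝ≥0∞) = ∫⁻ τ in Ioc (0:ℝ) y, (f * g) τ :=
            lintegral_congr hfg
        _ ≤ _ := ENNReal.lintegral_mul_le_Lp_mul_Lq _ ⟨by norm_num, by norm_num, by norm_num⟩ hmf hmg
    have hf2 : ∫⁻ τ in Ioc (0:ℝ) y, f τ ^ (2:ℝ) = ENNReal.ofReal ((Real.exp (m*y) - 1)/m) := by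
      have hptw : ∀ τ, f τ ^ (2:ℝ) = ENNReal.ofReal (Real.exp (m*τ)) := by
        intro τ
        rw [hf, ENNReal.ofReal_rpow_of_pos (Real.exp_pos _), ← Real.exp_mul]
        ring_nf
      rw [lintegral_congr hptw, ← ofReal_integral_eq_lintegral_ofReal]
      · rw [← intervalIntegral.integral_of_le hy0, integral_exp_mul hm.ne']
      · exact (Real.continuous_exp.comp (continuous_const.mul continuous_id)).integrableOn_Ioc
      · filter_upwards with τ using (Real.exp_pos _).le
    have hg2 : ∫⁻ τ in Ioc (0:ℝ) y, g τ ^ (2:ℝ) ≤ R := by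
      have hptw : ∀ τ, g τ ^ (2:ℝ) = ENNReal.ofReal (Real.exp (-m*τ)) * (‖r τ‖₊ : ℝ≥0∞) ^ 2 := by
        intro τ
        rw [hg, ENNReal.mul_rpow_of_nonneg _ _ (by norm_num),
          ENNReal.ofReal_rpow_of_pos (Real.exp_pos _), ← Real.exp_mul,
          show (-m*τ/2 * 2) = -m*τ by ring, show ((2:ℝ)) = ((2:ℕ):ℝ) by norm_num,
          ENNReal.rpow_natCast]
      rw [lintegral_congr hptw]
      exact lintegral_mono_set (Ioc_subset_Ioc le_rfl hy.2)
    -- combine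
    have sqle : (‖∫ τ in (0:ℝ)..y, r τ‖₊ : ℝ≥0∞) ^ 2
        ≤ ENNReal.ofReal ((Real.exp (m*y) - 1)/m) * R := by
      calc (‖∫ τ in (0:ℝ)..y, r τ‖₊ : ℝ≥0∞) ^ 2
          ≤ ((∫⁻ τ in Ioc (0:ℝ) y, f τ ^ (2:ℝ)) ^ ((1:ℝ)/2)
            * (∫⁻ τ in Ioc (0:ℝ) y, g τ ^ (2:ℝ)) ^ ((1:ℝ)/2)) ^ 2 := by
            gcongr
            exact s1.trans cs
        _ = (∫⁻ τ in Ioc (0:ℝ) y, f τ ^ (2:ℝ)) * (∫⁻ τ in Ioc (0:ℝ) y, g τ ^ (2:ℝ)) := by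
            rw [mul_pow, ← ENNReal.rpow_natCast (_ ^ ((1:ℝ)/2)) 2,
              ← ENNReal.rpow_natCast ((∫⁻ τ in Ioc (0:ℝ) y, g τ ^ (2:ℝ)) ^ ((1:ℝ)/2)) 2,
              ← ENNReal.rpow_mul, ← ENNReal.rpow_mul]
            norm_num
        _ ≤ _ := by rw [hf2]; gcongr
    calc ENNReal.ofReal (Real.exp (-m*y)) * (‖∫ τ in (0:ℝ)..y, r τ‖₊ : ℝ≥0∞) ^ 2
        ≤ ENNReal.ofReal (Real.exp (-m*y)) * (ENNReal.ofReal ((Real.exp (m*y) - 1)/m) * R) := by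
          gcongr
      _ = ENNReal.ofReal (Real.exp (-m*y) * ((Real.exp (m*y) - 1)/m)) * R := by
          rw [← mul_assoc, ← ENNReal.ofReal_mul (Real.exp_pos _).le]
      _ ≤ ENNReal.ofReal (min (1/m) y) * R := by
          gcongr
          have hev : Real.exp (-m*y) * ((Real.exp (m*y) - 1)/m) = (1 - Real.exp (-m*y))/m := by
            rw [mul_div_assoc', mul_sub, ← Real.exp_add, mul_one,
              show -m*y + m*y = 0 by ring, Real.exp_zero]
          rw [hev, le_min_iff]
          constructor
          · gcongr <;> nlinarith [Real.exp_pos (-m*y)]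
          · rw [div_le_iff₀ hm]
            nlinarith [Real.add_one_le_exp (-m*y)]
  calc ∫⁻ y in Ioc (0:ℝ) 1, ENNReal.ofReal (Real.exp (-m*y)) * (‖∫ τ in (0:ℝ)..y, r τ‖₊ : ℝ≥0∞) ^ 2
      ≤ ∫⁻ y in Ioc (0:ℝ) 1, ENNReal.ofReal (min (1/m) y) * R := by
        refine lintegral_mono_ae ?_
        filter_upwards [ae_restrict_mem measurableSet_Ioc] with y hy using key y hy
    _ = (∫⁻ y in Ioc (0:ℝ) 1, ENNReal.ofReal (min (1/m) y)) * R := by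
        rw [lintegral_mul_const'' _ ?_]
        exact (ENNReal.measurable_ofReal.comp
          ((continuous_const.min continuous_id).measurable)).aemeasurable
    _ ≤ ENNReal.ofReal (min (1/m) (1/2)) * R := by
        gcongr
        have hint : IntegrableOn (fun y : ℝ => min (1/m) y) (Ioc 0 1) volume :=
          (continuous_const.min continuous_id).integrableOn_Ioc
        rw [← ofReal_integral_eq_lintegral_ofReal hint ?_]
        · apply ENNReal.ofReal_le_ofReal
          rw [le_min_iff]
          constructor
          · have h1 : ∫ y in Ioc (0:ℝ) 1, min (1/m) y ≤ ∫ _y in Ioc (0:ℝ) 1, (1/m) :=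
              setIntegral_mono_on hint (integrableOn_const (by simp))
                measurableSet_Ioc (fun y _ => min_le_left _ _)
            have h2 : ∫ _y in Ioc (0:ℝ) 1, (1/m : ℝ) = 1/m := by
              simp [Real.volume_Ioc]
            linarith
          · have h2 : ∫ y in Ioc (0:ℝ) 1, min (1/m) y ≤ ∫ y in Ioc (0:ℝ) 1, y :=
              setIntegral_mono_on hint continuous_id.integrableOn_Ioc
                measurableSet_Ioc (fun y _ => min_le_right _ _)
            have h3 : ∫ y in Ioc (0:ℝ) 1, y = 1/2 := by
              rw [← intervalIntegral.integral_of_le zero_le_one]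
              simp
            linarith
        · filter_upwards [ae_restrict_mem measurableSet_Ioc] with y hy
          exact le_min (by positivity) hy.1.le

lemma restrict_usq_eq : (volume : Measure (ℝ×ℝ)).restrict usq
    = (volume.restrict (Ioc (0:ℝ) 1)).prod (volume.restrict (Ioc (0:ℝ) 1)) := by
  rw [Measure.volume_eq_prod, Measure.prod_restrict]
  rfl

lemma LL_iter {F : Type*} [NormedAddCommGroup F] (m : ℝ) (v : ℝ×ℝ → F)
    (hv : AEStronglyMeasurable v (volume.restrict usq)) :
    LL m v = ∫⁻ x in Ioc (0:ℝ) 1, ∫⁻ y in Ioc (0:ℝ) 1,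
      wt m (x,y) * (‖v (x,y)‖₊ : ℝ≥0∞) ^ 2 := by
  have hme : AEMeasurable (fun p : ℝ×ℝ => wt m p * (‖v p‖₊ : ℝ≥0∞) ^ 2)
      ((volume.restrict (Ioc (0:ℝ) 1)).prod (volume.restrict (Ioc (0:ℝ) 1))) := by
    rw [← restrict_usq_eq]
    exact ((wt_meas m).aemeasurable.mul (hv.enorm.pow_const 2))
  rw [LL, restrict_usq_eq, lintegral_prod _ hme]

lemma LL_iter_swap {F : Type*} [NormedAddCommGroup F] (m : ℝ) (v : ℝ×ℝ → F)
    (hv : AEStronglyMeasurable v (volume.restrict usq)) :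
    LL m v = ∫⁻ y in Ioc (0:ℝ) 1, ∫⁻ x in Ioc (0:ℝ) 1,
      wt m (x,y) * (‖v (x,y)‖₊ : ℝ≥0∞) ^ 2 := by
  have hme : AEMeasurable (fun p : ℝ×ℝ => wt m p * (‖v p‖₊ : ℝ≥0∞) ^ 2)
      ((volume.restrict (Ioc (0:ℝ) 1)).prod (volume.restrict (Ioc (0:ℝ) 1))) := by
    rw [← restrict_usq_eq]
    exact ((wt_meas m).aemeasurable.mul (hv.enorm.pow_const 2))
  rw [LL, restrict_usq_eq, lintegral_prod_symm _ hme]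

variable {F : Type*} [NormedAddCommGroup F] [NormedSpace ℝ F]

/-- integration of the second variable over `(0, y]` -/
def Jy (v : ℝ×ℝ → F) (p : ℝ×ℝ) : F := ∫ τ in Ioc (0:ℝ) p.2, v (p.1, τ)

/-- integration of the first variable over `(0, x]` -/
def Jx (v : ℝ×ℝ → F) (p : ℝ×ℝ) : F := ∫ σ in Ioc (0:ℝ) p.1, v (σ, p.2)

lemma Jy_sm {v : ℝ×ℝ → F} (hv : StronglyMeasurable v) : StronglyMeasurable (Jy v) := by
  have h1 : StronglyMeasurable (Function.uncurry
      (fun (p : ℝ×ℝ) (τ : ℝ) => if τ ∈ Ioc (0:ℝ) p.2 then v (p.1, τ) else 0)) := by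
    apply StronglyMeasurable.ite ?_ ?_ stronglyMeasurable_const
    · show MeasurableSet {q : (ℝ×ℝ)×ℝ | q.2 ∈ Ioc (0:ℝ) q.1.2}
      have : {q : (ℝ×ℝ)×ℝ | q.2 ∈ Ioc (0:ℝ) q.1.2} = {q : (ℝ×ℝ)×ℝ | 0 < q.2} ∩
        {q : (ℝ×ℝ)×ℝ | q.2 ≤ q.1.2} := by ext q; simp [Set.mem_Ioc, and_comm]
      rw [this]
      exact (measurableSet_lt measurable_const measurable_snd).inter
        (measurableSet_le measurable_snd (measurable_snd.comp measurable_fst))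
    · exact hv.comp_measurable ((measurable_fst.comp measurable_fst).prodMk measurable_snd)
  have h2 := h1.integral_prod_right (ν := volume)
  have h3 : (fun p : ℝ×ℝ => ∫ τ : ℝ, (if τ ∈ Ioc (0:ℝ) p.2 then v (p.1, τ) else 0)) = Jy v := by
    funext p
    rw [Jy, ← integral_indicator measurableSet_Ioc]
    congr 1
    funext τ
    simp [Set.indicator_apply]
  rw [← h3]
  exact h2

lemma Jx_sm {v : ℝ×ℝ → F} (hv : StronglyMeasurable v) : StronglyMeasurable (Jx v) := by
  have h1 : StronglyMeasurable (Function.uncurry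
      (fun (p : ℝ×ℝ) (σ : ℝ) => if σ ∈ Ioc (0:ℝ) p.1 then v (σ, p.2) else 0)) := by
    apply StronglyMeasurable.ite ?_ ?_ stronglyMeasurable_const
    · show MeasurableSet {q : (ℝ×ℝ)×ℝ | q.2 ∈ Ioc (0:ℝ) q.1.1}
      have : {q : (ℝ×ℝ)×ℝ | q.2 ∈ Ioc (0:ℝ) q.1.1} = {q : (ℝ×ℝ)×ℝ | 0 < q.2} ∩
        {q : (ℝ×ℝ)×ℝ | q.2 ≤ q.1.1} := by ext q; simp [Set.mem_Ioc, and_comm]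
      rw [this]
      exact (measurableSet_lt measurable_const measurable_snd).inter
        (measurableSet_le measurable_snd (measurable_fst.comp measurable_fst))
    · exact hv.comp_measurable (measurable_snd.prodMk (measurable_snd.comp measurable_fst))
  have h2 := h1.integral_prod_right (ν := volume)
  have h3 : (fun p : ℝ×ℝ => ∫ σ : ℝ, (if σ ∈ Ioc (0:ℝ) p.1 then v (σ, p.2) else 0)) = Jx v := by
    funext p
    rw [Jx, ← integral_indicator measurableSet_Ioc]
    congr 1
    funext σ
    simp [Set.indicator_apply]
  rw [← h3]
  exact h2

lemma wt_split (m x y : ℝ) :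
    wt m (x,y) = ENNReal.ofReal (Real.exp (-m*x)) * ENNReal.ofReal (Real.exp (-m*y)) := by
  rw [wt, ← ENNReal.ofReal_mul (Real.exp_pos _).le, ← Real.exp_add]
  congr 2
  ring

lemma kernel_y {m : ℝ} (hm : 0 < m) {v : ℝ×ℝ → F} (hv : StronglyMeasurable v) :
    LL m (Jy v) ≤ ENNReal.ofReal (min (1/m) (1/2)) * LL m v := by
  set c := ENNReal.ofReal (min (1/m) (1/2)) with hc
  rw [LL_iter m (Jy v) (Jy_sm hv).aestronglyMeasurable,
    LL_iter m v hv.aestronglyMeasurable]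
  have inner_le : ∀ x : ℝ, (∫⁻ y in Ioc (0:ℝ) 1, wt m (x,y) * (‖Jy v (x,y)‖₊ : ℝ≥0∞) ^ 2)
      ≤ c * ∫⁻ y in Ioc (0:ℝ) 1, wt m (x,y) * (‖v (x,y)‖₊ : ℝ≥0∞) ^ 2 := by
    intro x
    have hsm : Measurable fun τ : ℝ => ((‖v (x, τ)‖₊ : ℝ≥0∞)) :=
      (hv.comp_measurable (measurable_const.prodMk measurable_id)).enorm
    calc (∫⁻ y in Ioc (0:ℝ) 1, wt m (x,y) * (‖Jy v (x,y)‖₊ : ℝ≥0∞) ^ 2)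
        = ENNReal.ofReal (Real.exp (-m*x)) * ∫⁻ y in Ioc (0:ℝ) 1,
            ENNReal.ofReal (Real.exp (-m*y)) * (‖∫ τ in (0:ℝ)..y, v (x,τ)‖₊ : ℝ≥0∞) ^ 2 := by
          rw [← lintegral_const_mul' _ _ ENNReal.ofReal_ne_top]
          apply lintegral_congr_ae
          filter_upwards [ae_restrict_mem measurableSet_Ioc] with y hy
          rw [wt_split, mul_assoc, Jy, intervalIntegral.integral_of_le hy.1.le]
      _ ≤ ENNReal.ofReal (Real.exp (-m*x)) * (c * ∫⁻ τ in Ioc (0:ℝ) 1,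
            ENNReal.ofReal (Real.exp (-m*τ)) * (‖v (x,τ)‖₊ : ℝ≥0∞) ^ 2) := by
          gcongr
          exact oneD hm (fun τ => v (x,τ)) hsm.aemeasurable
      _ = c * ∫⁻ y in Ioc (0:ℝ) 1, wt m (x,y) * (‖v (x,y)‖₊ : ℝ≥0∞) ^ 2 := by
          rw [← mul_assoc, mul_comm (ENNReal.ofReal (Real.exp (-m*x))) c, mul_assoc,
            ← lintegral_const_mul' _ _ ENNReal.ofReal_ne_top]
          congr 1
          apply lintegral_congr
          intro y
          rw [wt_split, mul_assoc]
  calc ∫⁻ x in Ioc (0:ℝ) 1, ∫⁻ y in Ioc (0:ℝ) 1, wt m (x,y) * (‖Jy v (x,y)‖₊ : ℝ≥0∞) ^ 2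
      ≤ ∫⁻ x in Ioc (0:ℝ) 1, c * ∫⁻ y in Ioc (0:ℝ) 1, wt m (x,y) * (‖v (x,y)‖₊ : ℝ≥0∞) ^ 2 :=
        lintegral_mono inner_le
    _ = c * ∫⁻ x in Ioc (0:ℝ) 1, ∫⁻ y in Ioc (0:ℝ) 1, wt m (x,y) * (‖v (x,y)‖₊ : ℝ≥0∞) ^ 2 :=
        lintegral_const_mul' _ _ ENNReal.ofReal_ne_top

lemma kernel_x {m : ℝ} (hm : 0 < m) {v : ℝ×ℝ → F} (hv : StronglyMeasurable v) :
    LL m (Jx v) ≤ ENNReal.ofReal (min (1/m) (1/2)) * LL m v := by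
  set c := ENNReal.ofReal (min (1/m) (1/2)) with hc
  rw [LL_iter_swap m (Jx v) (Jx_sm hv).aestronglyMeasurable,
    LL_iter_swap m v hv.aestronglyMeasurable]
  have inner_le : ∀ y : ℝ, (∫⁻ x in Ioc (0:ℝ) 1, wt m (x,y) * (‖Jx v (x,y)‖₊ : ℝ≥0∞) ^ 2)
      ≤ c * ∫⁻ x in Ioc (0:ℝ) 1, wt m (x,y) * (‖v (x,y)‖₊ : ℝ≥0∞) ^ 2 := by
    intro y
    have hsm : Measurable fun σ : ℝ => ((‖v (σ, y)‖₊ : ℝ≥0∞)) :=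
      (hv.comp_measurable (measurable_id.prodMk measurable_const)).enorm
    calc (∫⁻ x in Ioc (0:ℝ) 1, wt m (x,y) * (‖Jx v (x,y)‖₊ : ℝ≥0∞) ^ 2)
        = ENNReal.ofReal (Real.exp (-m*y)) * ∫⁻ x in Ioc (0:ℝ) 1,
            ENNReal.ofReal (Real.exp (-m*x)) * (‖∫ σ in (0:ℝ)..x, v (σ,y)‖₊ : ℝ≥0∞) ^ 2 := by
          rw [← lintegral_const_mul' _ _ ENNReal.ofReal_ne_top]
          apply lintegral_congr_ae
          filter_upwards [ae_restrict_mem measurableSet_Ioc] with x hx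
          rw [wt_split, mul_comm (ENNReal.ofReal (Real.exp (-m*x))), mul_assoc, Jx,
            intervalIntegral.integral_of_le hx.1.le]
      _ ≤ ENNReal.ofReal (Real.exp (-m*y)) * (c * ∫⁻ σ in Ioc (0:ℝ) 1,
            ENNReal.ofReal (Real.exp (-m*σ)) * (‖v (σ,y)‖₊ : ℝ≥0∞) ^ 2) := by
          gcongr
          exact oneD hm (fun σ => v (σ,y)) hsm.aemeasurable
      _ = c * ∫⁻ x in Ioc (0:ℝ) 1, wt m (x,y) * (‖v (x,y)‖₊ : ℝ≥0∞) ^ 2 := by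
          rw [← mul_assoc, mul_comm (ENNReal.ofReal (Real.exp (-m*y))) c, mul_assoc,
            ← lintegral_const_mul' _ _ ENNReal.ofReal_ne_top]
          congr 1
          apply lintegral_congr
          intro x
          rw [wt_split]
          ring
  calc ∫⁻ y in Ioc (0:ℝ) 1, ∫⁻ x in Ioc (0:ℝ) 1, wt m (x,y) * (‖Jx v (x,y)‖₊ : ℝ≥0∞) ^ 2
      ≤ ∫⁻ y in Ioc (0:ℝ) 1, c * ∫⁻ x in Ioc (0:ℝ) 1, wt m (x,y) * (‖v (x,y)‖₊ : ℝ≥0∞) ^ 2 :=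
        lintegral_mono inner_le
    _ = c * ∫⁻ y in Ioc (0:ℝ) 1, ∫⁻ x in Ioc (0:ℝ) 1, wt m (x,y) * (‖v (x,y)‖₊ : ℝ≥0∞) ^ 2 :=
        lintegral_const_mul' _ _ ENNReal.ofReal_ne_top

lemma NN_of_LL_le {u v : ℝ×ℝ → F} {c : ℝ} (hc : 0 ≤ c)
    (h : LL m u ≤ ENNReal.ofReal c * LL m v) :
    NN m u ≤ ENNReal.ofReal c ^ ((1:ℝ)/2) * NN m v := by
  rw [NN, NN, ← ENNReal.mul_rpow_of_nonneg _ _ (by norm_num : (0:ℝ) ≤ 1/2)]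
  exact ENNReal.rpow_le_rpow h (by norm_num)

lemma NN_Jy_le {m : ℝ} (hm : 0 < m) {v : ℝ×ℝ → F} (hv : StronglyMeasurable v) :
    NN m (Jy v) ≤ ENNReal.ofReal (min (1/m) (1/2)) ^ ((1:ℝ)/2) * NN m v :=
  NN_of_LL_le (le_min (by positivity) (by norm_num)) (kernel_y hm hv)

lemma NN_Jx_le {m : ℝ} (hm : 0 < m) {v : ℝ×ℝ → F} (hv : StronglyMeasurable v) :
    NN m (Jx v) ≤ ENNReal.ofReal (min (1/m) (1/2)) ^ ((1:ℝ)/2) * NN m v :=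
  NN_of_LL_le (le_min (by positivity) (by norm_num)) (kernel_x hm hv)

lemma caratheodory {n : ℕ} {f : ℝ → ℝ → EuclideanSpace ℝ (Fin n) → EuclideanSpace ℝ (Fin n)}
    (hmeas : ∀ z, Measurable (fun p : ℝ×ℝ => f p.1 p.2 z))
    (hcont : ∀ x y, Continuous (f x y))
    {g : ℝ×ℝ → EuclideanSpace ℝ (Fin n)} (hg : Measurable g) :
    Measurable (fun p : ℝ×ℝ => f p.1 p.2 (g p)) := by
  set φ := SimpleFunc.approxOn g hg univ 0 (mem_univ 0) with hφ
  have hst : Filter.Tendsto (fun k => fun p : ℝ×ℝ => f p.1 p.2 (φ k p)) Filter.atTop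
      (nhds (fun p : ℝ×ℝ => f p.1 p.2 (g p))) := by
    refine tendsto_pi_nhds.2 fun p => ?_
    exact ((hcont p.1 p.2).tendsto _).comp
      (SimpleFunc.tendsto_approxOn hg (mem_univ 0) (by simp))
  refine measurable_of_tendsto_metrizable (fun k => ?_) hst
  have hrep : (fun p : ℝ×ℝ => f p.1 p.2 ((φ k) p))
      = fun p : ℝ×ℝ => ∑ c ∈ (φ k).range, ((φ k) ⁻¹' {c}).indicator (fun q => f q.1 q.2 c) p := by
    funext p
    rw [Finset.sum_eq_single (φ k p)]
    · simp [Set.indicator_apply]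
    · intro c _ hne
      apply Set.indicator_of_notMem
      simp only [Set.mem_preimage, Set.mem_singleton_iff]
      exact fun h => hne h.symm
    · intro h
      exact absurd (SimpleFunc.mem_range_self _ p) h
  rw [hrep]
  refine Finset.measurable_sum _ fun c _ => ?_
  exact (hmeas c).indicator ((φ k).measurableSet_fiber c)

lemma LL_le_LL_zero {F : Type*} [NormedAddCommGroup F] {m : ℝ} (hm : 0 ≤ m) (v : ℝ×ℝ → F) :
    LL m v ≤ LL 0 v := by
  rw [LL, LL]
  refine lintegral_mono_ae ?_
  filter_upwards [ae_restrict_mem usq_meas] with p hp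
  gcongr
  calc wt m p ≤ 1 := wt_le_one hm hp
    _ = wt 0 p := by rw [wt]; norm_num

lemma LL_zero_le {F : Type*} [NormedAddCommGroup F] {m : ℝ} (hm : 0 ≤ m) (v : ℝ×ℝ → F) :
    LL 0 v ≤ ENNReal.ofReal (Real.exp (2*m)) * LL m v := by
  rw [LL, LL, ← lintegral_const_mul' _ _ ENNReal.ofReal_ne_top]
  refine lintegral_mono_ae ?_
  filter_upwards [ae_restrict_mem usq_meas] with p hp
  rw [← mul_assoc]
  gcongr
  rw [wt, wt, ← ENNReal.ofReal_mul (Real.exp_pos _).le, ← Real.exp_add]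
  apply ENNReal.ofReal_le_ofReal
  apply Real.exp_le_exp.2
  obtain ⟨h1, h2⟩ := hp
  nlinarith [h1.2, h2.2]

/-- Bridge between the iterated interval-integral `wnorm`-type expression and `NN`. -/
lemma bridge {F : Type*} [NormedAddCommGroup F] {m : ℝ} {v : ℝ → ℝ → F}
    (hv : AEStronglyMeasurable (fun p : ℝ×ℝ => v p.1 p.2) (volume.restrict usq))
    (hfin : LL m (fun p : ℝ×ℝ => v p.1 p.2) ≠ ⊤) :
    (∫ x in (0:ℝ)..1, ∫ y in (0:ℝ)..1, Real.exp (-m * (x + y)) * ‖v x y‖ ^ 2) ^ ((1:ℝ)/2)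
      = (NN m (fun p : ℝ×ℝ => v p.1 p.2)).toReal := by
  set u : ℝ×ℝ → F := fun p => v p.1 p.2 with hu
  set u' := hv.mk u with hu'
  have hsm : StronglyMeasurable u' := hv.stronglyMeasurable_mk
  have hae : u =ᶠ[ae (volume.restrict usq)] u' := hv.ae_eq_mk
  set φ : ℝ → ℝ≥0∞ := fun x => ∫⁻ y in Ioc (0:ℝ) 1, wt m (x,y) * (‖u' (x,y)‖₊ : ℝ≥0∞) ^ 2 with hφ
  have hφm : Measurable φ := by
    apply Measurable.lintegral_prod_right
    exact (wt_meas m).mul (hsm.enorm.pow_const 2)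
  have hLL' : LL m u' = ∫⁻ x in Ioc (0:ℝ) 1, φ x := LL_iter m u' hsm.aestronglyMeasurable
  have hLLe : LL m u = LL m u' := by
    rw [LL, LL]
    apply lintegral_congr_ae
    filter_upwards [hae] with p hp
    rw [hp]
  have hfin' : (∫⁻ x in Ioc (0:ℝ) 1, φ x) ≠ ⊤ := by rw [← hLL', ← hLLe]; exact hfin
  have hφlt : ∀ᵐ x ∂(volume.restrict (Ioc (0:ℝ) 1)), φ x < ⊤ :=
    ae_lt_top hφm hfin'
  have hslice : ∀ᵐ x ∂(volume.restrict (Ioc (0:ℝ) 1)),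
      (fun y => u (x,y)) =ᶠ[ae (volume.restrict (Ioc (0:ℝ) 1))] (fun y => u' (x,y)) := by
    have := hae
    rw [Filter.EventuallyEq, restrict_usq_eq] at this
    exact Measure.ae_ae_of_ae_prod this
  have inner_eq : ∀ᵐ x ∂(volume.restrict (Ioc (0:ℝ) 1)),
      (∫ y in (0:ℝ)..1, Real.exp (-m * (x + y)) * ‖v x y‖ ^ 2) = (φ x).toReal := by
    filter_upwards [hslice, hφlt] with x hx _
    rw [intervalIntegral.integral_of_le zero_le_one]
    have e1 : (∫ y in Ioc (0:ℝ) 1, Real.exp (-m * (x + y)) * ‖v x y‖ ^ 2)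
        = ∫ y in Ioc (0:ℝ) 1, Real.exp (-m * (x + y)) * ‖u' (x,y)‖ ^ 2 := by
      apply integral_congr_ae
      filter_upwards [hx] with y hy
      rw [show v x y = u (x,y) from rfl, hy]
    rw [e1, integral_eq_lintegral_of_nonneg_ae]
    · congr 1
      apply lintegral_congr
      intro y
      rw [ENNReal.ofReal_mul (Real.exp_pos _).le, ENNReal.ofReal_pow (norm_nonneg _),
        ofReal_norm]
      rfl
    · filter_upwards with y using mul_nonneg (Real.exp_pos _).le (by positivity)
    · refine (Measurable.stronglyMeasurable ?_).aestronglyMeasurable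
      have h1 : Measurable fun y : ℝ => Real.exp (-m*(x+y)) :=
        (Real.continuous_exp.comp
          (continuous_const.mul (continuous_const.add continuous_id))).measurable
      have h2 : Measurable fun y : ℝ => ‖u' (x,y)‖ :=
        (hsm.norm.comp_measurable (measurable_const.prodMk measurable_id)).measurable
      exact h1.mul (h2.pow_const 2)
  have outer : (∫ x in (0:ℝ)..1, ∫ y in (0:ℝ)..1, Real.exp (-m * (x + y)) * ‖v x y‖ ^ 2)
      = (LL m u).toReal := by
    rw [intervalIntegral.integral_of_le zero_le_one, integral_congr_ae inner_eq,
      integral_toReal hφm.aemeasurable hφlt, hLLe, hLL']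
  rw [outer, NN, ← ENNReal.toReal_rpow]

lemma NN_ne_top_iff {G : Type*} [NormedAddCommGroup G] {m : ℝ} {v : ℝ×ℝ → G} :
    NN m v ≠ ⊤ ↔ LL m v ≠ ⊤ := by
  rw [NN]
  constructor
  · intro h hLL
    rw [hLL] at h
    exact h (by simp [ENNReal.top_rpow_of_pos (by norm_num : (0:ℝ) < 1/2)])
  · intro h
    exact ENNReal.rpow_ne_top_of_nonneg (by norm_num) h

lemma LL_congr {G : Type*} [NormedAddCommGroup G] {m : ℝ} {u v : ℝ×ℝ → G}
    (h : u =ᶠ[ae (volume.restrict usq)] v) : LL m u = LL m v := by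
  rw [LL, LL]
  apply lintegral_congr_ae
  filter_upwards [h] with p hp
  rw [hp]

lemma final_arith {B m c s rL rb rZ rZx rZy rG rF2 rA1 rA2 rH rJH rW rF : ℝ}
    (hB : 0 < B) (hm : 8*B < m) (hm0 : 0 < m) (hc0 : 0 ≤ c) (hc2 : c ≤ 1/2)
    (hcm : c*m ≤ 1) (hs0 : 0 ≤ s) (hs1 : s ≤ 1) (hss : s*s = c)
    (hr0 : 0 ≤ rL) (hrb0 : 0 ≤ rb)
    (t1 : rZx ≤ s * rL) (t2 : rZy ≤ s * rL) (t3 : rZ ≤ s * (s * rL))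
    (t4 : rG ≤ B * rZ + rb) (t5 : rF2 ≤ B * rZ + rb)
    (t6 : rA1 ≤ B * rZx) (t7 : rA2 ≤ B * rZy)
    (t8 : rH ≤ rF2 + rA1 + rA2) (t9 : rJH ≤ s * rH) (t10 : rW ≤ s * rJH)
    (t11 : rL ≤ rF + rG + rW) :
    (1 - 8 * B / m) * rL - 2 * rb ≤ rF := by
  have e : s * (s * rL) = c * rL := by rw [← mul_assoc, hss]
  have u1 : B * rZ ≤ B * (c * rL) := by
    rw [← e]; exact mul_le_mul_of_nonneg_left t3 hB.le
  have u2 : B * rZx ≤ B * (s * rL) := mul_le_mul_of_nonneg_left t1 hB.le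
  have u3 : B * rZy ≤ B * (s * rL) := mul_le_mul_of_nonneg_left t2 hB.le
  have u4 : rH ≤ B * (c * rL) + rb + B * (s * rL) + B * (s * rL) := by linarith
  have u5 : rW ≤ s * (s * rH) := by
    have := mul_le_mul_of_nonneg_left t9 hs0
    linarith [mul_le_mul_of_nonneg_left t9 hs0]
  have u6 : s * (s * rH) = c * rH := by rw [← mul_assoc, hss]
  have u7 : rW ≤ c * (B * (c * rL) + rb + B * (s * rL) + B * (s * rL)) :=
    calc rW ≤ s * (s * rH) := u5
      _ = c * rH := u6
      _ ≤ _ := mul_le_mul_of_nonneg_left u4 hc0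
  have u9 : rG ≤ B * (c * rL) + rb := by linarith
  have main : rL ≤ rF + (B * (c * rL) + rb)
      + c * (B * (c * rL) + rb + B * (s * rL) + B * (s * rL)) := by linarith
  -- coefficient estimate : B*c + B*c*c + 2*B*c*s ≤ 8*B/m
  have hq : (B*c + B*c*c + 2*B*c*s) * m ≤ 8 * B := by
    have hpos : (0:ℝ) ≤ 1 + c + 2*s := by linarith
    have h1 : (B*c + B*c*c + 2*B*c*s) * m = B * ((c*m) * (1 + c + 2*s)) := by ring
    have h2 : (c*m) * (1+c+2*s) ≤ 1 * (1+c+2*s) := mul_le_mul_of_nonneg_right hcm hpos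
    calc (B*c+B*c*c+2*B*c*s)*m = B*((c*m)*(1+c+2*s)) := h1
      _ ≤ B*(7/2) := by
          refine mul_le_mul_of_nonneg_left ?_ hB.le
          linarith
      _ ≤ 8*B := by linarith
  have hq8 : B*c + B*c*c + 2*B*c*s ≤ 8 * B / m := (le_div_iff₀ hm0).mpr hq
  have hcoef : (8 * B / m - (B*c + B*c*c + 2*B*c*s)) * rL ≥ 0 :=
    mul_nonneg (by linarith) hr0
  nlinarith [main, hcoef, hrb0, hc2, hc0,
    mul_nonneg hrb0 (show (0:ℝ) ≤ 1 - c by linarith)]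

set_option maxHeartbeats 1000000 in
lemma core {n : ℕ}
    (f1 f2 : ℝ → ℝ → EuclideanSpace ℝ (Fin n) → EuclideanSpace ℝ (Fin n))
    (A1 A2 : ℝ → ℝ → (EuclideanSpace ℝ (Fin n) →L[ℝ] EuclideanSpace ℝ (Fin n)))
    (B : ℝ) (hB : 0 < B) (b : ℝ → ℝ → ℝ)
    (hbL2 : MemLp (fun p : ℝ × ℝ => b p.1 p.2) 2 (volume.restrict Q))
    (hf1meas : ∀ z, Measurable (fun p : ℝ × ℝ => f1 p.1 p.2 z))
    (hf2meas : ∀ z, Measurable (fun p : ℝ × ℝ => f2 p.1 p.2 z))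
    (hf1cont : ∀ x y, Continuous (f1 x y)) (hf2cont : ∀ x y, Continuous (f2 x y))
    (hA1meas : Measurable (fun p : ℝ × ℝ => A1 p.1 p.2))
    (hA2meas : Measurable (fun p : ℝ × ℝ => A2 p.1 p.2))
    (hgrowth : ∀ x y z, ‖f1 x y z‖ ≤ B * ‖z‖ + b x y ∧ ‖f2 x y z‖ ≤ B * ‖z‖ + b x y)
    (hAbd : ∀ x y, ‖A1 x y‖ ≤ B ∧ ‖A2 x y‖ ≤ B)
    {m : ℝ} (hm : 8 * B < m) (l : ℝ → ℝ → EuclideanSpace ℝ (Fin n))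
    (hl : MemLp (fun p : ℝ × ℝ => l p.1 p.2) 2 (volume.restrict Q)) :
    AEStronglyMeasurable (fun p : ℝ×ℝ => Fop f1 f2 A1 A2 l p.1 p.2) (volume.restrict usq) ∧
    LL m (fun p : ℝ×ℝ => Fop f1 f2 A1 A2 l p.1 p.2) ≠ ⊤ ∧
    (1 - 8 * B / m) * wnorm m l - 2 * wnormR m b ≤ wnorm m (Fop f1 f2 A1 A2 l) := by
  have hm0 : 0 < m := lt_trans (by positivity) hm
  have hsub : usq ⊆ Q := by
    rintro ⟨x, y⟩ ⟨hx, hy⟩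
    exact ⟨⟨hx.1.le, hx.2⟩, ⟨hy.1.le, hy.2⟩⟩
  have hres : (volume : Measure (ℝ×ℝ)).restrict usq = (volume.restrict Q).restrict usq := by
    rw [Measure.restrict_restrict usq_meas, inter_eq_self_of_subset_left hsub]
  have hlu : AEStronglyMeasurable (fun p : ℝ×ℝ => l p.1 p.2) (volume.restrict usq) := by
    rw [hres]; exact hl.aestronglyMeasurable.restrict
  have hbu : AEStronglyMeasurable (fun p : ℝ×ℝ => b p.1 p.2) (volume.restrict usq) := by
    rw [hres]; exact hbL2.aestronglyMeasurable.restrict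
  set L := hlu.mk _ with hLdef
  have hLsm : StronglyMeasurable L := hlu.stronglyMeasurable_mk
  have hLae : (fun p : ℝ×ℝ => l p.1 p.2) =ᶠ[ae (volume.restrict usq)] L := hlu.ae_eq_mk
  set ν := (volume : Measure ℝ).restrict (Ioc (0:ℝ) 1) with hν
  have hprodae : (fun p : ℝ×ℝ => l p.1 p.2) =ᶠ[ae (ν.prod ν)] L := by
    rw [← restrict_usq_eq]; exact hLae
  have hx_slices : ∀ᵐ x ∂ν, (fun y => l x y) =ᶠ[ae ν] (fun y => L (x,y)) :=
    Measure.ae_ae_of_ae_prod hprodae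
  have hy_slices : ∀ᵐ y ∂ν, (fun x => l x y) =ᶠ[ae ν] (fun x => L (x,y)) := by
    have hsw := (Measure.measurePreserving_swap (μ := ν) (ν := ν)).quasiMeasurePreserving
    have h2 := hsw.ae_eq_comp hprodae
    have h3 : ∀ᵐ q ∂(ν.prod ν), l q.2 q.1 = L (q.2, q.1) := h2
    exact Measure.ae_ae_of_ae_prod h3
  -- the measurable realizations of z, z_x, z_y, f1∘z, H, W
  set Zx := Jy L with hZxdef
  set Zy := Jx L with hZydef
  set Z := Jx (Jy L) with hZdef
  have hZxsm : StronglyMeasurable Zx := Jy_sm hLsm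
  have hZysm : StronglyMeasurable Zy := Jx_sm hLsm
  have hZsm : StronglyMeasurable Z := Jx_sm (Jy_sm hLsm)
  set G1 : ℝ×ℝ → EuclideanSpace ℝ (Fin n) := fun p => f1 p.1 p.2 (Z p) with hG1def
  have hG1sm : StronglyMeasurable G1 :=
    (caratheodory hf1meas hf1cont hZsm.measurable).stronglyMeasurable
  set F2 : ℝ×ℝ → EuclideanSpace ℝ (Fin n) := fun p => f2 p.1 p.2 (Z p) with hF2def
  have hF2sm : StronglyMeasurable F2 :=
    (caratheodory hf2meas hf2cont hZsm.measurable).stronglyMeasurable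
  set AA1 : ℝ×ℝ → EuclideanSpace ℝ (Fin n) := fun p => A1 p.1 p.2 (Zx p) with hAA1def
  have hAA1sm : StronglyMeasurable AA1 := by
    have hp : Measurable fun p : ℝ×ℝ =>
        ((A1 p.1 p.2, Zx p) : (EuclideanSpace ℝ (Fin n) →L[ℝ] EuclideanSpace ℝ (Fin n))
          × EuclideanSpace ℝ (Fin n)) := hA1meas.prodMk hZxsm.measurable
    exact (isBoundedBilinearMap_apply.continuous.measurable.comp hp).stronglyMeasurable
  set AA2 : ℝ×ℝ → EuclideanSpace ℝ (Fin n) := fun p => A2 p.1 p.2 (Zy p) with hAA2def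
  have hAA2sm : StronglyMeasurable AA2 := by
    have hp : Measurable fun p : ℝ×ℝ =>
        ((A2 p.1 p.2, Zy p) : (EuclideanSpace ℝ (Fin n) →L[ℝ] EuclideanSpace ℝ (Fin n))
          × EuclideanSpace ℝ (Fin n)) := hA2meas.prodMk hZysm.measurable
    exact (isBoundedBilinearMap_apply.continuous.measurable.comp hp).stronglyMeasurable
  set H := F2 + AA1 + AA2 with hHdef
  have hHsm : StronglyMeasurable H := (hF2sm.add hAA1sm).add hAA2sm
  set W := Jx (Jy H) with hWdef
  have hWsm : StronglyMeasurable W := Jx_sm (Jy_sm hHsm)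
  -- identification of the interval integrals with the measurable realizations
  have Zeq : ∀ p ∈ usq, (∫ s in (0:ℝ)..p.1, ∫ t in (0:ℝ)..p.2, l s t) = Z p := by
    rintro ⟨x, y⟩ ⟨hx, hy⟩
    rw [intervalIntegral.integral_of_le hx.1.le]
    show _ = ∫ σ in Ioc (0:ℝ) x, (Jy L) (σ, y)
    apply integral_congr_ae
    have hxs : ∀ᵐ s ∂(volume.restrict (Ioc (0:ℝ) x)),
        (fun t => l s t) =ᶠ[ae ν] fun t => L (s,t) :=
      ae_restrict_of_ae_restrict_of_subset (Ioc_subset_Ioc le_rfl hx.2) hx_slices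
    filter_upwards [hxs] with s hs
    rw [intervalIntegral.integral_of_le hy.1.le]
    show (∫ t in Ioc (0:ℝ) y, l s t) = ∫ t in Ioc (0:ℝ) y, L (s, t)
    exact integral_congr_ae
      (ae_restrict_of_ae_restrict_of_subset (Ioc_subset_Ioc le_rfl hy.2) hs)
  have Zxgood : ∀ᵐ x ∂ν, ∀ y, 0 < y → y ≤ 1 → (∫ τ in (0:ℝ)..y, l x τ) = Zx (x, y) := by
    filter_upwards [hx_slices] with x hx
    intro y hy0 hy1
    rw [intervalIntegral.integral_of_le hy0.le]
    show _ = ∫ τ in Ioc (0:ℝ) y, L (x, τ)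
    exact integral_congr_ae
      (ae_restrict_of_ae_restrict_of_subset (Ioc_subset_Ioc le_rfl hy1) hx)
  have Zygood : ∀ᵐ t ∂ν, ∀ s, 0 < s → s ≤ 1 → (∫ σ in (0:ℝ)..s, l σ t) = Zy (s, t) := by
    filter_upwards [hy_slices] with t ht
    intro s hs0 hs1
    rw [intervalIntegral.integral_of_le hs0.le]
    show _ = ∫ σ in Ioc (0:ℝ) s, L (σ, t)
    exact integral_congr_ae
      (ae_restrict_of_ae_restrict_of_subset (Ioc_subset_Ioc le_rfl hs1) ht)
  have Weq : ∀ p ∈ usq, (∫ s in (0:ℝ)..p.1, ∫ t in (0:ℝ)..p.2,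
      (f2 s t (∫ σ in (0:ℝ)..s, ∫ τ in (0:ℝ)..t, l σ τ)
        + A1 s t (∫ τ in (0:ℝ)..t, l s τ) + A2 s t (∫ σ in (0:ℝ)..s, l σ t))) = W p := by
    rintro ⟨x, y⟩ ⟨hx, hy⟩
    rw [intervalIntegral.integral_of_le hx.1.le]
    show _ = ∫ σ in Ioc (0:ℝ) x, (Jy H) (σ, y)
    apply integral_congr_ae
    have hgood : ∀ᵐ s ∂(volume.restrict (Ioc (0:ℝ) x)),
        ((∀ y', 0 < y' → y' ≤ 1 → (∫ τ in (0:ℝ)..y', l s τ) = Zx (s, y'))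
          ∧ s ∈ Ioc (0:ℝ) x) :=
      ((ae_restrict_of_ae_restrict_of_subset (Ioc_subset_Ioc le_rfl hx.2) Zxgood).and
        (ae_restrict_mem measurableSet_Ioc))
    filter_upwards [hgood] with s hsgood
    obtain ⟨hsx, hs⟩ := hsgood
    rw [intervalIntegral.integral_of_le hy.1.le]
    show _ = ∫ τ in Ioc (0:ℝ) y, H (s, τ)
    apply integral_congr_ae
    have htgood : ∀ᵐ t ∂(volume.restrict (Ioc (0:ℝ) y)),
        ((∀ s', 0 < s' → s' ≤ 1 → (∫ σ in (0:ℝ)..s', l σ t) = Zy (s', t))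
          ∧ t ∈ Ioc (0:ℝ) y) :=
      ((ae_restrict_of_ae_restrict_of_subset (Ioc_subset_Ioc le_rfl hy.2) Zygood).and
        (ae_restrict_mem measurableSet_Ioc))
    filter_upwards [htgood] with t htgood'
    obtain ⟨hts, ht⟩ := htgood'
    have hpin : (s, t) ∈ usq := ⟨⟨hs.1, hs.2.trans hx.2⟩, ⟨ht.1, ht.2.trans hy.2⟩⟩
    rw [Zeq (s,t) hpin, hsx t ht.1 (ht.2.trans hy.2), hts s hs.1 (hs.2.trans hx.2)]
    simp only [hHdef, Pi.add_apply, hF2def, hAA1def, hAA2def]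
  have Feq : (fun p : ℝ×ℝ => Fop f1 f2 A1 A2 l p.1 p.2)
      =ᶠ[ae (volume.restrict usq)] (L + G1 + W) := by
    filter_upwards [hLae, ae_restrict_mem usq_meas] with p hp hpin
    show Fop f1 f2 A1 A2 l p.1 p.2 = _
    rw [Fop, Zeq p hpin, Weq p hpin, hp]
    simp only [Pi.add_apply, hG1def]
  have hFae : AEStronglyMeasurable (fun p : ℝ×ℝ => Fop f1 f2 A1 A2 l p.1 p.2)
      (volume.restrict usq) :=
    ((hLsm.add hG1sm).add hWsm).aestronglyMeasurable.congr Feq.symm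
  -- constants
  set c := min (1/m) (1/2) with hcdef
  have hc0 : 0 ≤ c := le_min (by positivity) (by norm_num)
  set κ := ENNReal.ofReal c ^ ((1:ℝ)/2) with hκdef
  have hκne : κ ≠ ⊤ := ENNReal.rpow_ne_top_of_nonneg (by norm_num) ENNReal.ofReal_ne_top
  -- finiteness
  have hLfin : LL m L ≠ ⊤ := by
    rw [← LL_congr hLae]
    exact (LL_lt_top_of_memℒp hm0.le hl).ne
  have hbfin : LL m (fun p : ℝ×ℝ => b p.1 p.2) ≠ ⊤ := (LL_lt_top_of_memℒp hm0.le hbL2).ne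
  have hNL : NN m L ≠ ⊤ := NN_ne_top_iff.2 hLfin
  have hNb : NN m (fun p : ℝ×ℝ => b p.1 p.2) ≠ ⊤ := NN_ne_top_iff.2 hbfin
  -- kernel estimates
  have hZxκ : NN m Zx ≤ κ * NN m L := NN_Jy_le hm0 hLsm
  have hZyκ : NN m Zy ≤ κ * NN m L := NN_Jx_le hm0 hLsm
  have hZκ : NN m Z ≤ κ * (κ * NN m L) :=
    (NN_Jx_le hm0 (Jy_sm hLsm)).trans (mul_le_mul_right (NN_Jy_le hm0 hLsm) κ)
  have hJHκ : NN m (Jy H) ≤ κ * NN m H := NN_Jy_le hm0 hHsm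
  have hWκ : NN m W ≤ κ * NN m (Jy H) := NN_Jx_le hm0 (Jy_sm hHsm)
  -- growth estimates
  have hG1le : NN m G1 ≤ ENNReal.ofReal B * NN m Z + NN m (fun p : ℝ×ℝ => b p.1 p.2) := by
    calc NN m G1 ≤ NN m ((fun p : ℝ×ℝ => B * ‖Z p‖) + (fun p : ℝ×ℝ => b p.1 p.2)) := by
          apply NN_mono
          filter_upwards with p
          rw [Pi.add_apply, Real.norm_eq_abs]
          exact ((hgrowth p.1 p.2 (Z p)).1).trans (le_abs_self _)
      _ ≤ NN m (fun p : ℝ×ℝ => B * ‖Z p‖) + NN m (fun p : ℝ×ℝ => b p.1 p.2) :=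
          NN_add_le m ((hZsm.norm.measurable.const_mul B).stronglyMeasurable.aestronglyMeasurable)
            hbu
      _ = ENNReal.ofReal B * NN m Z + NN m (fun p : ℝ×ℝ => b p.1 p.2) := by
          rw [NN_const_mul m hB.le, NN_norm_eq]
  have hF2le : NN m F2 ≤ ENNReal.ofReal B * NN m Z + NN m (fun p : ℝ×ℝ => b p.1 p.2) := by
    calc NN m F2 ≤ NN m ((fun p : ℝ×ℝ => B * ‖Z p‖) + (fun p : ℝ×ℝ => b p.1 p.2)) := by
          apply NN_mono
          filter_upwards with p
          rw [Pi.add_apply, Real.norm_eq_abs]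
          exact ((hgrowth p.1 p.2 (Z p)).2).trans (le_abs_self _)
      _ ≤ NN m (fun p : ℝ×ℝ => B * ‖Z p‖) + NN m (fun p : ℝ×ℝ => b p.1 p.2) :=
          NN_add_le m ((hZsm.norm.measurable.const_mul B).stronglyMeasurable.aestronglyMeasurable)
            hbu
      _ = ENNReal.ofReal B * NN m Z + NN m (fun p : ℝ×ℝ => b p.1 p.2) := by
          rw [NN_const_mul m hB.le, NN_norm_eq]
  have hAA1le : NN m AA1 ≤ ENNReal.ofReal B * NN m Zx := by
    rw [← NN_norm_eq m Zx, ← NN_const_mul m hB.le]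
    apply NN_mono
    filter_upwards with p
    rw [Real.norm_eq_abs, abs_of_nonneg (by positivity)]
    calc ‖A1 p.1 p.2 (Zx p)‖ ≤ ‖A1 p.1 p.2‖ * ‖Zx p‖ := (A1 p.1 p.2).le_opNorm _
      _ ≤ B * ‖Zx p‖ := by gcongr; exact (hAbd p.1 p.2).1
  have hAA2le : NN m AA2 ≤ ENNReal.ofReal B * NN m Zy := by
    rw [← NN_norm_eq m Zy, ← NN_const_mul m hB.le]
    apply NN_mono
    filter_upwards with p
    rw [Real.norm_eq_abs, abs_of_nonneg (by positivity)]
    calc ‖A2 p.1 p.2 (Zy p)‖ ≤ ‖A2 p.1 p.2‖ * ‖Zy p‖ := (A2 p.1 p.2).le_opNorm _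
      _ ≤ B * ‖Zy p‖ := by gcongr; exact (hAbd p.1 p.2).2
  have hHle : NN m H ≤ NN m F2 + NN m AA1 + NN m AA2 :=
    calc NN m H ≤ NN m (F2 + AA1) + NN m AA2 :=
        NN_add_le m (hF2sm.add hAA1sm).aestronglyMeasurable hAA2sm.aestronglyMeasurable
      _ ≤ NN m F2 + NN m AA1 + NN m AA2 := by
        gcongr
        exact NN_add_le m hF2sm.aestronglyMeasurable hAA1sm.aestronglyMeasurable
  -- main triangle
  have hdecomp : NN m L ≤ NN m (L + G1 + W) + NN m G1 + NN m W := by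
    have hrw : L = ((L + G1 + W) + (-G1)) + (-W) := by
      funext p
      simp only [Pi.add_apply, Pi.neg_apply]
      abel
    calc NN m L = NN m (((L + G1 + W) + (-G1)) + (-W)) := by rw [← hrw]
      _ ≤ NN m ((L + G1 + W) + (-G1)) + NN m (-W) :=
          NN_add_le m (((hLsm.add hG1sm).add hWsm).add hG1sm.neg).aestronglyMeasurable
            hWsm.neg.aestronglyMeasurable
      _ ≤ (NN m (L + G1 + W) + NN m (-G1)) + NN m (-W) := by
          gcongr
          exact NN_add_le m ((hLsm.add hG1sm).add hWsm).aestronglyMeasurable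
            hG1sm.neg.aestronglyMeasurable
      _ = NN m (L + G1 + W) + NN m G1 + NN m W := by rw [NN_neg, NN_neg]
  have hFopNN : NN m (fun p : ℝ×ℝ => Fop f1 f2 A1 A2 l p.1 p.2) = NN m (L + G1 + W) :=
    NN_congr m Feq
  -- finiteness of all the pieces
  have hNZx : NN m Zx ≠ ⊤ := (hZxκ.trans_lt (ENNReal.mul_lt_top hκne.lt_top hNL.lt_top)).ne
  have hNZy : NN m Zy ≠ ⊤ := (hZyκ.trans_lt (ENNReal.mul_lt_top hκne.lt_top hNL.lt_top)).ne
  have hNZ : NN m Z ≠ ⊤ := (hZκ.trans_lt (ENNReal.mul_lt_top hκne.lt_top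
    (ENNReal.mul_lt_top hκne.lt_top hNL.lt_top))).ne
  have hNG1 : NN m G1 ≠ ⊤ := (hG1le.trans_lt (ENNReal.add_lt_top.2
    ⟨ENNReal.mul_lt_top ENNReal.ofReal_ne_top.lt_top hNZ.lt_top, hNb.lt_top⟩)).ne
  have hNF2 : NN m F2 ≠ ⊤ := (hF2le.trans_lt (ENNReal.add_lt_top.2
    ⟨ENNReal.mul_lt_top ENNReal.ofReal_ne_top.lt_top hNZ.lt_top, hNb.lt_top⟩)).ne
  have hNAA1 : NN m AA1 ≠ ⊤ := (hAA1le.trans_lt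
    (ENNReal.mul_lt_top ENNReal.ofReal_ne_top.lt_top hNZx.lt_top)).ne
  have hNAA2 : NN m AA2 ≠ ⊤ := (hAA2le.trans_lt
    (ENNReal.mul_lt_top ENNReal.ofReal_ne_top.lt_top hNZy.lt_top)).ne
  have hNH : NN m H ≠ ⊤ := (hHle.trans_lt (ENNReal.add_lt_top.2
    ⟨ENNReal.add_lt_top.2 ⟨hNF2.lt_top, hNAA1.lt_top⟩, hNAA2.lt_top⟩)).ne
  have hNJH : NN m (Jy H) ≠ ⊤ := (hJHκ.trans_lt
    (ENNReal.mul_lt_top hκne.lt_top hNH.lt_top)).ne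
  have hNW : NN m W ≠ ⊤ := (hWκ.trans_lt
    (ENNReal.mul_lt_top hκne.lt_top hNJH.lt_top)).ne
  have hNT : NN m (L + G1 + W) ≠ ⊤ := by
    have h1 : NN m (L + G1 + W) ≤ NN m (L + G1) + NN m W :=
      NN_add_le m (hLsm.add hG1sm).aestronglyMeasurable hWsm.aestronglyMeasurable
    have h2 : NN m (L + G1) ≤ NN m L + NN m G1 :=
      NN_add_le m hLsm.aestronglyMeasurable hG1sm.aestronglyMeasurable
    exact (h1.trans_lt (ENNReal.add_lt_top.2
      ⟨h2.trans_lt (ENNReal.add_lt_top.2 ⟨hNL.lt_top, hNG1.lt_top⟩), hNW.lt_top⟩)).ne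
  have hFfin : LL m (fun p : ℝ×ℝ => Fop f1 f2 A1 A2 l p.1 p.2) ≠ ⊤ :=
    NN_ne_top_iff.1 (by rw [hFopNN]; exact hNT)
  refine ⟨hFae, hFfin, ?_⟩
  -- pass to real numbers
  set s : ℝ := Real.sqrt c with hsdef
  have hκt : κ.toReal = s := by
    rw [hκdef, ← ENNReal.toReal_rpow, ENNReal.toReal_ofReal hc0, hsdef, Real.sqrt_eq_rpow]
  have hs0 : 0 ≤ s := Real.sqrt_nonneg _
  have hs1 : s ≤ 1 := by
    rw [hsdef]
    rw [show (1:ℝ) = Real.sqrt 1 by simp]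
    exact Real.sqrt_le_sqrt (le_trans (min_le_right _ _) (by norm_num))
  have hss : s * s = c := Real.mul_self_sqrt hc0
  set rL := (NN m L).toReal with hrL
  set rb := (NN m (fun p : ℝ×ℝ => b p.1 p.2)).toReal with hrb
  set rZ := (NN m Z).toReal with hrZ
  set rZx := (NN m Zx).toReal
  set rZy := (NN m Zy).toReal
  set rG := (NN m G1).toReal
  set rF2 := (NN m F2).toReal
  set rA1 := (NN m AA1).toReal
  set rA2 := (NN m AA2).toReal
  set rH := (NN m H).toReal
  set rJH := (NN m (Jy H)).toReal
  set rW := (NN m W).toReal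
  set rF := (NN m (fun p : ℝ×ℝ => Fop f1 f2 A1 A2 l p.1 p.2)).toReal with hrF
  have t1 : rZx ≤ s * rL := by
    have := ENNReal.toReal_mono (ENNReal.mul_ne_top hκne hNL) hZxκ
    rwa [ENNReal.toReal_mul, hκt] at this
  have t2 : rZy ≤ s * rL := by
    have := ENNReal.toReal_mono (ENNReal.mul_ne_top hκne hNL) hZyκ
    rwa [ENNReal.toReal_mul, hκt] at this
  have t3 : rZ ≤ s * (s * rL) := by
    have := ENNReal.toReal_mono
      (ENNReal.mul_ne_top hκne (ENNReal.mul_ne_top hκne hNL)) hZκ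
    rwa [ENNReal.toReal_mul, ENNReal.toReal_mul, hκt] at this
  have t4 : rG ≤ B * rZ + rb := by
    have := ENNReal.toReal_mono (ENNReal.add_ne_top.2
      ⟨ENNReal.mul_ne_top ENNReal.ofReal_ne_top hNZ, hNb⟩) hG1le
    rwa [ENNReal.toReal_add (ENNReal.mul_ne_top ENNReal.ofReal_ne_top hNZ) hNb,
      ENNReal.toReal_mul, ENNReal.toReal_ofReal hB.le] at this
  have t5 : rF2 ≤ B * rZ + rb := by
    have := ENNReal.toReal_mono (ENNReal.add_ne_top.2
      ⟨ENNReal.mul_ne_top ENNReal.ofReal_ne_top hNZ, hNb⟩) hF2le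
    rwa [ENNReal.toReal_add (ENNReal.mul_ne_top ENNReal.ofReal_ne_top hNZ) hNb,
      ENNReal.toReal_mul, ENNReal.toReal_ofReal hB.le] at this
  have t6 : rA1 ≤ B * rZx := by
    have := ENNReal.toReal_mono (ENNReal.mul_ne_top ENNReal.ofReal_ne_top hNZx) hAA1le
    rwa [ENNReal.toReal_mul, ENNReal.toReal_ofReal hB.le] at this
  have t7 : rA2 ≤ B * rZy := by
    have := ENNReal.toReal_mono (ENNReal.mul_ne_top ENNReal.ofReal_ne_top hNZy) hAA2le
    rwa [ENNReal.toReal_mul, ENNReal.toReal_ofReal hB.le] at this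
  have t8 : rH ≤ rF2 + rA1 + rA2 := by
    have := ENNReal.toReal_mono (ENNReal.add_ne_top.2
      ⟨ENNReal.add_ne_top.2 ⟨hNF2, hNAA1⟩, hNAA2⟩) hHle
    rwa [ENNReal.toReal_add (ENNReal.add_ne_top.2 ⟨hNF2, hNAA1⟩) hNAA2,
      ENNReal.toReal_add hNF2 hNAA1] at this
  have t9 : rJH ≤ s * rH := by
    have := ENNReal.toReal_mono (ENNReal.mul_ne_top hκne hNH) hJHκ
    rwa [ENNReal.toReal_mul, hκt] at this
  have t10 : rW ≤ s * rJH := by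
    have := ENNReal.toReal_mono (ENNReal.mul_ne_top hκne hNJH) hWκ
    rwa [ENNReal.toReal_mul, hκt] at this
  have t11 : rL ≤ rF + rG + rW := by
    have h0 := hdecomp
    rw [← hFopNN] at h0
    have := ENNReal.toReal_mono (ENNReal.add_ne_top.2
      ⟨ENNReal.add_ne_top.2 ⟨by rw [hFopNN]; exact hNT, hNG1⟩, hNW⟩) h0
    rwa [ENNReal.toReal_add (ENNReal.add_ne_top.2 ⟨by rw [hFopNN]; exact hNT, hNG1⟩) hNW,
      ENNReal.toReal_add (by rw [hFopNN]; exact hNT) hNG1] at this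
  -- bridge to wnorm
  have hwl : wnorm m l = rL := by
    rw [wnorm, bridge hlu (by rw [LL_congr hLae]; exact hLfin), hrL, NN_congr m hLae]
  have hwb : wnormR m b = rb := by
    rw [wnormR]
    have : (∫ x in (0:ℝ)..1, ∫ y in (0:ℝ)..1, Real.exp (-m * (x + y)) * |b x y| ^ 2)
        = ∫ x in (0:ℝ)..1, ∫ y in (0:ℝ)..1, Real.exp (-m * (x + y)) * ‖b x y‖ ^ 2 := by
      simp_rw [Real.norm_eq_abs]
    rw [this, bridge hbu hbfin, hrb]
  have hwF : wnorm m (Fop f1 f2 A1 A2 l) = rF := by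
    rw [wnorm, bridge hFae hFfin, hrF]
  rw [hwl, hwb, hwF]
  -- final arithmetic
  have hr0 : 0 ≤ rL := ENNReal.toReal_nonneg
  have hrb0 : 0 ≤ rb := ENNReal.toReal_nonneg
  have hc2 : c ≤ 1/2 := min_le_right _ _
  have hcm : c * m ≤ 1 := by
    calc c * m ≤ (1/m) * m := by gcongr; exact min_le_left _ _
      _ = 1 := by field_simp
  exact final_arith hB hm hm0 hc0 hc2 hcm hs0 hs1 hss hr0 hrb0 t1 t2 t3 t4 t5 t6 t7 t8 t9 t10 t11


end Aux

/-- Lemma 3.2: under the growth conditions (C1)–(C2) the operator `F` is coercive in norm: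
for `m > 8B` one has `‖F(z)‖_{L²_m} ≥ (1 − 8B/m)‖z‖_{AC₀²,m} − 2‖b‖_{L²_m}`, and
consequently `‖F(z)‖_{L²} → ∞` as `‖z‖_{AC₀²} → ∞`. -/
theorem F_coercive {n : ℕ}
    (f1 f2 : ℝ → ℝ → EuclideanSpace ℝ (Fin n) → EuclideanSpace ℝ (Fin n))
    (A1 A2 : ℝ → ℝ → (EuclideanSpace ℝ (Fin n) →L[ℝ] EuclideanSpace ℝ (Fin n)))
    (B : ℝ) (hB : 0 < B) (b : ℝ → ℝ → ℝ) (hb0 : ∀ x y, 0 ≤ b x y)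
    (hbL2 : MemLp (fun p : ℝ × ℝ => b p.1 p.2) 2 (volume.restrict Q))
    (hf1meas : ∀ z, Measurable (fun p : ℝ × ℝ => f1 p.1 p.2 z))
    (hf2meas : ∀ z, Measurable (fun p : ℝ × ℝ => f2 p.1 p.2 z))
    (hf1cont : ∀ x y, Continuous (f1 x y)) (hf2cont : ∀ x y, Continuous (f2 x y))
    (hA1meas : Measurable (fun p : ℝ × ℝ => A1 p.1 p.2))
    (hA2meas : Measurable (fun p : ℝ × ℝ => A2 p.1 p.2))
    (hgrowth : ∀ x y z, ‖f1 x y z‖ ≤ B * ‖z‖ + b x y ∧ ‖f2 x y z‖ ≤ B * ‖z‖ + b x y)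
    (hAbd : ∀ x y, ‖A1 x y‖ ≤ B ∧ ‖A2 x y‖ ≤ B) :
    (∀ m : ℝ, 8 * B < m →
      ∀ l : ℝ → ℝ → EuclideanSpace ℝ (Fin n),
        MemLp (fun p : ℝ × ℝ => l p.1 p.2) 2 (volume.restrict Q) →
        (1 - 8 * B / m) * wnorm m l - 2 * wnormR m b ≤ wnorm m (Fop f1 f2 A1 A2 l)) ∧
    (∀ C : ℝ, ∃ R : ℝ, ∀ l : ℝ → ℝ → EuclideanSpace ℝ (Fin n),
        MemLp (fun p : ℝ × ℝ => l p.1 p.2) 2 (volume.restrict Q) →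
        R ≤ wnorm 0 l → C ≤ wnorm 0 (Fop f1 f2 A1 A2 l)) := by
  constructor
  · intro m hm l hl
    exact (core f1 f2 A1 A2 B hB b hbL2 hf1meas hf2meas hf1cont hf2cont hA1meas hA2meas
      hgrowth hAbd hm l hl).2.2
  · intro C
    set m := 8*B + 1 with hmdef
    have hm : 8*B < m := lt_add_one _
    have hm0 : 0 < m := by positivity
    have hBm1 : 8*B/m < 1 := (div_lt_one hm0).mpr hm
    set ε := (1 - 8*B/m) * Real.exp (-m) with hεdef
    have hε0 : 0 < ε := mul_pos (by linarith) (Real.exp_pos _)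
    refine ⟨(C + 2 * wnormR m b)/ε + 1, fun l hl hR => ?_⟩
    obtain ⟨hFae, hFfin, hineq⟩ := core f1 f2 A1 A2 B hB b hbL2 hf1meas hf2meas hf1cont
      hf2cont hA1meas hA2meas hgrowth hAbd hm l hl
    have hsub : usq ⊆ Q := by
      rintro ⟨x, y⟩ ⟨hx, hy⟩
      exact ⟨⟨hx.1.le, hx.2⟩, ⟨hy.1.le, hy.2⟩⟩
    have hres : (volume : Measure (ℝ×ℝ)).restrict usq = (volume.restrict Q).restrict usq := by
      rw [Measure.restrict_restrict usq_meas, inter_eq_self_of_subset_left hsub]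
    have hlu : AEStronglyMeasurable (fun p : ℝ×ℝ => l p.1 p.2) (volume.restrict usq) := by
      rw [hres]; exact hl.aestronglyMeasurable.restrict
    have hLmfin : LL m (fun p : ℝ×ℝ => l p.1 p.2) ≠ ⊤ := (LL_lt_top_of_memℒp hm0.le hl).ne
    have hL0fin : LL 0 (fun p : ℝ×ℝ => l p.1 p.2) ≠ ⊤ := (LL_lt_top_of_memℒp le_rfl hl).ne
    have hF0fin : LL 0 (fun p : ℝ×ℝ => Fop f1 f2 A1 A2 l p.1 p.2) ≠ ⊤ :=
      ((LL_zero_le hm0.le _).trans_lt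
        (ENNReal.mul_lt_top ENNReal.ofReal_ne_top.lt_top hFfin.lt_top)).ne
    -- bridges
    have bw1 : wnorm m l = (NN m (fun p : ℝ×ℝ => l p.1 p.2)).toReal := bridge hlu hLmfin
    have bw2 : wnorm 0 l = (NN 0 (fun p : ℝ×ℝ => l p.1 p.2)).toReal := bridge hlu hL0fin
    have bw3 : wnorm m (Fop f1 f2 A1 A2 l)
        = (NN m (fun p : ℝ×ℝ => Fop f1 f2 A1 A2 l p.1 p.2)).toReal := bridge hFae hFfin
    have bw4 : wnorm 0 (Fop f1 f2 A1 A2 l)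
        = (NN 0 (fun p : ℝ×ℝ => Fop f1 f2 A1 A2 l p.1 p.2)).toReal := bridge hFae hF0fin
    -- comparison 1 : wnorm m (Fop l) ≤ wnorm 0 (Fop l)
    have cmp1 : wnorm m (Fop f1 f2 A1 A2 l) ≤ wnorm 0 (Fop f1 f2 A1 A2 l) := by
      rw [bw3, bw4]
      apply ENNReal.toReal_mono (NN_ne_top_iff.2 hF0fin)
      rw [NN, NN]
      exact ENNReal.rpow_le_rpow (LL_le_LL_zero hm0.le _) (by norm_num)
    -- comparison 2 : wnorm 0 l ≤ exp m * wnorm m l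
    have cmp2 : wnorm 0 l ≤ Real.exp m * wnorm m l := by
      rw [bw1, bw2]
      have h1 : NN 0 (fun p : ℝ×ℝ => l p.1 p.2)
          ≤ ENNReal.ofReal (Real.exp m) * NN m (fun p : ℝ×ℝ => l p.1 p.2) := by
        rw [NN, NN]
        calc (LL 0 (fun p : ℝ×ℝ => l p.1 p.2)) ^ ((1:ℝ)/2)
            ≤ (ENNReal.ofReal (Real.exp (2*m)) * LL m (fun p : ℝ×ℝ => l p.1 p.2)) ^ ((1:ℝ)/2) :=
              ENNReal.rpow_le_rpow (LL_zero_le hm0.le _) (by norm_num)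
          _ = ENNReal.ofReal (Real.exp (2*m)) ^ ((1:ℝ)/2)
              * (LL m (fun p : ℝ×ℝ => l p.1 p.2)) ^ ((1:ℝ)/2) :=
              ENNReal.mul_rpow_of_nonneg _ _ (by norm_num)
          _ = ENNReal.ofReal (Real.exp m) * (LL m (fun p : ℝ×ℝ => l p.1 p.2)) ^ ((1:ℝ)/2) := by
              rw [ENNReal.ofReal_rpow_of_pos (Real.exp_pos _), ← Real.exp_mul,
                show 2*m*(1/2) = m by ring]
      have h2 := ENNReal.toReal_mono
        (ENNReal.mul_ne_top ENNReal.ofReal_ne_top (NN_ne_top_iff.2 hLmfin)) h1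
      rwa [ENNReal.toReal_mul, ENNReal.toReal_ofReal (Real.exp_pos _).le] at h2
    -- assemble
    have k1 : Real.exp (-m) * wnorm 0 l ≤ wnorm m l := by
      rw [Real.exp_neg, inv_mul_le_iff₀ (Real.exp_pos m)]
      exact cmp2
    have k2 : (1 - 8*B/m) * (Real.exp (-m) * wnorm 0 l) ≤ (1 - 8*B/m) * wnorm m l :=
      mul_le_mul_of_nonneg_left k1 (by linarith)
    have k3 : ε * ((C + 2 * wnormR m b)/ε + 1) = C + 2 * wnormR m b + ε := by
      field_simp
    have k4 : ε * ((C + 2 * wnormR m b)/ε + 1) ≤ ε * wnorm 0 l :=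
      mul_le_mul_of_nonneg_left hR hε0.le
    have k5 : ε * wnorm 0 l = (1 - 8*B/m) * (Real.exp (-m) * wnorm 0 l) := by
      rw [hεdef]; ring
    linarith
end

section
/- If a sequence {zᵏ} in AC₀²(Q,ℝⁿ) converges weakly to z⁰, i.e. the mixed derivatives z_{xy}ᵏ converge weakly in L²(Q,ℝⁿ) to z⁰_{xy}, then zᵏ converges uniformly to z⁰ on Q. -/
open MeasureTheory Set Real

lemma measurableSet_Q : MeasurableSet Q := measurableSet_Icc.prod measurableSet_Icc

lemma volume_Q_lt_top : volume Q < ⊤ :=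
  (isCompact_Icc.prod isCompact_Icc).measure_lt_top

instance : IsFiniteMeasure (volume.restrict Q) :=
  ⟨by rw [Measure.restrict_apply_univ]; exact volume_Q_lt_top⟩

/-- rectangle -/
def R (x y : ℝ) : Set (ℝ × ℝ) := Ioc (0:ℝ) x ×ˢ Ioc (0:ℝ) y

lemma measurableSet_R (x y : ℝ) : MeasurableSet (R x y) :=
  measurableSet_Ioc.prod measurableSet_Ioc

lemma R_subset_Q {x y : ℝ} (hx : x ≤ 1) (hy : y ≤ 1) : R x y ⊆ Q :=
  prod_mono ((Ioc_subset_Icc_self).trans (Icc_subset_Icc le_rfl hx))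
    ((Ioc_subset_Icc_self).trans (Icc_subset_Icc le_rfl hy))

lemma volume_R {x y : ℝ} (hx : 0 ≤ x) (hy : 0 ≤ y) :
    volume (R x y) = ENNReal.ofReal (x * y) := by
  rw [R, Measure.volume_eq_prod, Measure.prod_prod, Real.volume_Ioc, Real.volume_Ioc,
    sub_zero, sub_zero, ENNReal.ofReal_mul hx]

variable {n : ℕ}

lemma repr_lemma {f : ℝ → ℝ → EuclideanSpace ℝ (Fin n)}
    (hf : Integrable (fun p : ℝ × ℝ => f p.1 p.2) (volume.restrict Q))
    {x y : ℝ} (hx : x ∈ Icc (0:ℝ) 1) (hy : y ∈ Icc (0:ℝ) 1) :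
    (∫ s in (0:ℝ)..x, ∫ t in (0:ℝ)..y, f s t) = ∫ p in R x y, f p.1 p.2 ∂volume := by
  have hsub : R x y ⊆ Q := R_subset_Q hx.2 hy.2
  have hint : IntegrableOn (fun p : ℝ × ℝ => f p.1 p.2) (R x y) volume :=
    hf.mono_measure (Measure.restrict_mono hsub le_rfl)
  rw [show (∫ p in R x y, f p.1 p.2 ∂volume)
      = ∫ p in Ioc (0:ℝ) x ×ˢ Ioc (0:ℝ) y, f p.1 p.2 ∂(volume.prod volume) by
        rw [← Measure.volume_eq_prod]; rfl,
    setIntegral_prod _ (by rwa [← Measure.volume_eq_prod]),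
    intervalIntegral.integral_of_le hx.1]
  refine setIntegral_congr_fun measurableSet_Ioc (fun s _ => ?_)
  rw [intervalIntegral.integral_of_le hy.1]

lemma cs_bound {f : ℝ × ℝ → EuclideanSpace ℝ (Fin n)}
    (hf : MemLp f 2 (volume.restrict Q)) {S : Set (ℝ × ℝ)}
    (hS : MeasurableSet S) (hSQ : S ⊆ Q) :
    ‖∫ p in S, f p ∂volume‖
      ≤ (eLpNorm f 2 (volume.restrict Q)).toReal * (volume S).toReal ^ (1/2 : ℝ) := by
  have hle : volume.restrict S ≤ volume.restrict Q := Measure.restrict_mono hSQ le_rfl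
  have hmeas : AEStronglyMeasurable f (volume.restrict S) := hf.1.mono_measure hle
  have h1 : ‖∫ p in S, f p ∂volume‖ ≤ ∫ p in S, ‖f p‖ ∂volume :=
    norm_integral_le_integral_norm f
  have h2 : ∫ p in S, ‖f p‖ ∂volume = (eLpNorm f 1 (volume.restrict S)).toReal := by
    rw [eLpNorm_one_eq_lintegral_enorm, integral_norm_eq_lintegral_enorm hmeas]
  have h3 : eLpNorm f 1 (volume.restrict S)
      ≤ eLpNorm f 2 (volume.restrict Q) * (volume S) ^ (1/2 : ℝ) := by
    have := eLpNorm_le_eLpNorm_mul_rpow_measure_univ (μ := volume.restrict S)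
      (p := 1) (q := 2) one_le_two hmeas
    simp only [Measure.restrict_apply_univ, ENNReal.toReal_one, ENNReal.toReal_ofNat] at this
    rw [show (1/1 - 1/2 : ℝ) = 1/2 by norm_num] at this
    calc eLpNorm f 1 (volume.restrict S)
        ≤ eLpNorm f 2 (volume.restrict S) * volume S ^ (1/2 : ℝ) := this
      _ ≤ eLpNorm f 2 (volume.restrict Q) * volume S ^ (1/2 : ℝ) := by
          gcongr
  have hfin : eLpNorm f 2 (volume.restrict Q) * (volume S) ^ (1/2 : ℝ) ≠ ⊤ := by
    refine ENNReal.mul_ne_top hf.2.ne ?_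
    exact (ENNReal.rpow_lt_top_of_nonneg (by norm_num)
      ((measure_mono hSQ).trans_lt volume_Q_lt_top).ne).ne
  calc ‖∫ p in S, f p ∂volume‖ ≤ (eLpNorm f 1 (volume.restrict S)).toReal := h1.trans_eq h2
    _ ≤ (eLpNorm f 2 (volume.restrict Q) * (volume S) ^ (1/2 : ℝ)).toReal :=
        ENNReal.toReal_mono hfin h3
    _ = (eLpNorm f 2 (volume.restrict Q)).toReal * (volume S).toReal ^ (1/2 : ℝ) := by
        rw [ENNReal.toReal_mul, ENNReal.toReal_rpow]

lemma component_integral {f : ℝ × ℝ → EuclideanSpace ℝ (Fin n)}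
    (hf : MemLp f 2 (volume.restrict Q)) {a b : ℝ}
    (ha : a ∈ Icc (0:ℝ) 1) (hb : b ∈ Icc (0:ℝ) 1) (i : Fin n) :
    ∫ p in Q, (inner ℝ (f p) ((R a b).indicator (fun _ => EuclideanSpace.single i (1:ℝ)) p) : ℝ) ∂volume
      = (∫ p in R a b, f p ∂volume) i := by
  have hsub : R a b ⊆ Q := R_subset_Q ha.2 hb.2
  haveI : IsFiniteMeasure (volume.restrict (R a b)) :=
    ⟨by rw [Measure.restrict_apply_univ]
        exact (measure_mono hsub).trans_lt volume_Q_lt_top⟩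
  have hint : Integrable f (volume.restrict (R a b)) :=
    (hf.mono_measure (Measure.restrict_mono hsub le_rfl)).integrable one_le_two
  have h1 : ∀ p, (inner ℝ (f p) ((R a b).indicator (fun _ => EuclideanSpace.single i (1:ℝ)) p) : ℝ)
      = (R a b).indicator (fun p => (f p) i) p := by
    intro p
    by_cases hp : p ∈ R a b
    · simp [Set.indicator_of_mem hp, EuclideanSpace.inner_single_right]
    · simp [Set.indicator_of_notMem hp]
  simp_rw [h1]
  rw [setIntegral_indicator (measurableSet_R a b),
    inter_eq_self_of_subset_right hsub]
  have := (EuclideanSpace.proj (𝕜 := ℝ) i).integral_comp_comm hint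
  simpa using this

lemma pointwise_tendsto
    (l : ℕ → ℝ → ℝ → EuclideanSpace ℝ (Fin n))
    (l0 : ℝ → ℝ → EuclideanSpace ℝ (Fin n))
    (hl : ∀ k, MemLp (fun p : ℝ × ℝ => l k p.1 p.2) 2 (volume.restrict Q))
    (hl0 : MemLp (fun p : ℝ × ℝ => l0 p.1 p.2) 2 (volume.restrict Q))
    (hweak : ∀ g : ℝ → ℝ → EuclideanSpace ℝ (Fin n),
        MemLp (fun p : ℝ × ℝ => g p.1 p.2) 2 (volume.restrict Q) →
        Filter.Tendsto
          (fun k => ∫ p in Q, inner ℝ (l k p.1 p.2) (g p.1 p.2) ∂volume)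
          Filter.atTop
          (nhds (∫ p in Q, (inner ℝ (l0 p.1 p.2) (g p.1 p.2) : ℝ) ∂volume)))
    {a b : ℝ} (ha : a ∈ Icc (0:ℝ) 1) (hb : b ∈ Icc (0:ℝ) 1) :
    Filter.Tendsto (fun k => ∫ p in R a b, l k p.1 p.2 ∂volume) Filter.atTop
      (nhds (∫ p in R a b, l0 p.1 p.2 ∂volume)) := by
  have hcomp : ∀ i : Fin n,
      Filter.Tendsto (fun k => (∫ p in R a b, l k p.1 p.2 ∂volume) i) Filter.atTop
        (nhds ((∫ p in R a b, l0 p.1 p.2 ∂volume) i)) := by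
    intro i
    set g : ℝ → ℝ → EuclideanSpace ℝ (Fin n) := fun s t =>
      (R a b).indicator (fun _ => EuclideanSpace.single i (1:ℝ)) (s, t) with hg
    have hgm : MemLp (fun p : ℝ × ℝ => g p.1 p.2) 2 (volume.restrict Q) := by
      have : (fun p : ℝ × ℝ => g p.1 p.2)
          = (R a b).indicator (fun _ => EuclideanSpace.single i (1:ℝ)) := by
        funext p; rfl
      rw [this]
      exact (memLp_const _).indicator (measurableSet_R a b)
    have := hweak g hgm
    have e1 : ∀ k, (∫ p in Q, (inner ℝ (l k p.1 p.2) (g p.1 p.2) : ℝ) ∂volume)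
        = (∫ p in R a b, l k p.1 p.2 ∂volume) i := fun k =>
      component_integral (hl k) ha hb i
    have e0 : (∫ p in Q, (inner ℝ (l0 p.1 p.2) (g p.1 p.2) : ℝ) ∂volume)
        = (∫ p in R a b, l0 p.1 p.2 ∂volume) i :=
      component_integral hl0 ha hb i
    rw [e0] at this
    simpa only [e1] using this
  have h2 : Filter.Tendsto
      (fun k => (WithLp.equiv 2 (Fin n → ℝ)) (∫ p in R a b, l k p.1 p.2 ∂volume))
      Filter.atTop
      (nhds ((WithLp.equiv 2 (Fin n → ℝ)) (∫ p in R a b, l0 p.1 p.2 ∂volume))) :=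
    tendsto_pi_nhds.mpr hcomp
  have := ((PiLp.continuous_toLp (p := 2) (β := fun _ : Fin n => ℝ)).tendsto _).comp h2
  simpa [Function.comp_def] using this

lemma uniform_bound
    (l : ℕ → ℝ → ℝ → EuclideanSpace ℝ (Fin n))
    (l0 : ℝ → ℝ → EuclideanSpace ℝ (Fin n))
    (hl : ∀ k, MemLp (fun p : ℝ × ℝ => l k p.1 p.2) 2 (volume.restrict Q))
    (hl0 : MemLp (fun p : ℝ × ℝ => l0 p.1 p.2) 2 (volume.restrict Q))
    (hweak : ∀ g : ℝ → ℝ → EuclideanSpace ℝ (Fin n),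
        MemLp (fun p : ℝ × ℝ => g p.1 p.2) 2 (volume.restrict Q) →
        Filter.Tendsto
          (fun k => ∫ p in Q, inner ℝ (l k p.1 p.2) (g p.1 p.2) ∂volume)
          Filter.atTop
          (nhds (∫ p in Q, (inner ℝ (l0 p.1 p.2) (g p.1 p.2) : ℝ) ∂volume))) :
    ∃ C : ℝ, ∀ k, (eLpNorm (fun p : ℝ × ℝ => l k p.1 p.2) 2 (volume.restrict Q)).toReal ≤ C := by
  set μ := volume.restrict Q
  set fk : ℕ → Lp (EuclideanSpace ℝ (Fin n)) 2 μ := fun k => (hl k).toLp _ with hfk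
  set G : ℕ → (Lp (EuclideanSpace ℝ (Fin n)) 2 μ) →L[ℝ] ℝ := fun k => innerSL ℝ (fk k) with hG
  have hpt : ∀ x : Lp (EuclideanSpace ℝ (Fin n)) 2 μ, ∃ C, ∀ k, ‖G k x‖ ≤ C := by
    intro x
    have hx : MemLp (fun p : ℝ × ℝ => (x : ℝ × ℝ → EuclideanSpace ℝ (Fin n)) (p.1, p.2)) 2 μ :=
      Lp.memLp x
    have htd := hweak (fun s t => x (s, t)) hx
    have heq : ∀ k, (∫ p in Q, (inner ℝ (l k p.1 p.2) ((x : ℝ × ℝ → _) (p.1, p.2)) : ℝ) ∂volume)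
        = G k x := by
      intro k
      rw [hG]
      simp only [innerSL_apply_apply]
      rw [L2.inner_def]
      refine integral_congr_ae ?_
      filter_upwards [(hl k).coeFn_toLp] with p hp
      simp [hfk, hp]
    have htd2 : Filter.Tendsto (fun k => G k x) Filter.atTop
        (nhds (∫ p in Q, (inner ℝ (l0 p.1 p.2) ((x : ℝ × ℝ → _) (p.1, p.2)) : ℝ) ∂volume)) := by
      exact (Filter.tendsto_congr heq).mp htd
    obtain ⟨C, hC⟩ := (htd2.norm.bddAbove_range)
    exact ⟨C, fun k => hC ⟨k, rfl⟩⟩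
  obtain ⟨C', hC'⟩ := banach_steinhaus hpt
  refine ⟨C', fun k => ?_⟩
  have := hC' k
  rwa [hG, innerSL_apply_norm, hfk, Lp.norm_toLp] at this

lemma diff_bound {f : ℝ × ℝ → EuclideanSpace ℝ (Fin n)}
    (hf : MemLp f 2 (volume.restrict Q)) {a b x y : ℝ}
    (ha : 0 ≤ a) (hax : a ≤ x) (hx : x ≤ 1)
    (hb : 0 ≤ b) (hby : b ≤ y) (hy : y ≤ 1) :
    ‖(∫ p in R x y, f p ∂volume) - ∫ p in R a b, f p ∂volume‖
      ≤ (eLpNorm f 2 (volume.restrict Q)).toReal * ((x - a) + (y - b)) ^ (1/2 : ℝ) := by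
  have hsub : R a b ⊆ R x y :=
    prod_mono (Ioc_subset_Ioc le_rfl hax) (Ioc_subset_Ioc le_rfl hby)
  have hRQ : R x y ⊆ Q := R_subset_Q hx hy
  haveI : IsFiniteMeasure (volume.restrict (R x y)) :=
    ⟨by rw [Measure.restrict_apply_univ]
        exact (measure_mono hRQ).trans_lt volume_Q_lt_top⟩
  have hintR : IntegrableOn f (R x y) volume :=
    (hf.mono_measure (Measure.restrict_mono hRQ le_rfl)).integrable one_le_two
  rw [← integral_diff (measurableSet_R a b) hintR hsub]
  have hSm : MeasurableSet (R x y \ R a b) :=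
    (measurableSet_R x y).diff (measurableSet_R a b)
  have hSQ : R x y \ R a b ⊆ Q := (diff_subset).trans hRQ
  refine (cs_bound hf hSm hSQ).trans ?_
  refine mul_le_mul_of_nonneg_left ?_ ENNReal.toReal_nonneg
  refine Real.rpow_le_rpow ENNReal.toReal_nonneg ?_ (by norm_num)
  · -- (volume (R x y \ R a b)).toReal ≤ (x - a) + (y - b)
    have hvol : volume (R x y \ R a b)
        ≤ ENNReal.ofReal (x - a) + ENNReal.ofReal (y - b) := by
      have hsub2 : R x y \ R a b ⊆ (Ioc a x ×ˢ Ioc (0:ℝ) y) ∪ (Ioc (0:ℝ) x ×ˢ Ioc b y) := by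
        rintro ⟨s, t⟩ ⟨hst, hmem⟩
        obtain ⟨hs, ht⟩ := hst
        by_cases hsa : a < s
        · exact Or.inl ⟨⟨hsa, hs.2⟩, ht⟩
        · push_neg at hsa
          by_cases htb : b < t
          · exact Or.inr ⟨hs, ⟨htb, ht.2⟩⟩
          · push_neg at htb
            exact absurd ⟨⟨hs.1, hsa⟩, ⟨ht.1, htb⟩⟩ hmem
      calc volume (R x y \ R a b)
          ≤ volume ((Ioc a x ×ˢ Ioc (0:ℝ) y) ∪ (Ioc (0:ℝ) x ×ˢ Ioc b y)) := measure_mono hsub2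
        _ ≤ volume (Ioc a x ×ˢ Ioc (0:ℝ) y) + volume (Ioc (0:ℝ) x ×ˢ Ioc b y) :=
            measure_union_le _ _
        _ ≤ ENNReal.ofReal (x - a) + ENNReal.ofReal (y - b) := by
            rw [Measure.volume_eq_prod, Measure.prod_prod, Measure.prod_prod,
              Real.volume_Ioc, Real.volume_Ioc, Real.volume_Ioc, Real.volume_Ioc,
              sub_zero, sub_zero]
            gcongr
            · exact mul_le_of_le_one_right (by positivity) (by
                rw [ENNReal.ofReal_le_one]; exact hy)
            · exact mul_le_of_le_one_left (by positivity) (by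
                rw [ENNReal.ofReal_le_one]; exact hx)
    have hne : (ENNReal.ofReal (x - a) + ENNReal.ofReal (y - b)) ≠ ⊤ := by finiteness
    calc (volume (R x y \ R a b)).toReal
        ≤ (ENNReal.ofReal (x - a) + ENNReal.ofReal (y - b)).toReal :=
          ENNReal.toReal_mono hne hvol
      _ = (x - a) + (y - b) := by
          rw [ENNReal.toReal_add ENNReal.ofReal_ne_top ENNReal.ofReal_ne_top,
            ENNReal.toReal_ofReal (by linarith), ENNReal.toReal_ofReal (by linarith)]

/-- Lemma 3.4(a): if `zᵏ(x,y) = ∫₀ˣ∫₀ʸ lᵏ` with `lᵏ = z_{xy}ᵏ ∈ L²(Q,ℝⁿ)` and the mixed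
derivatives `lᵏ` converge weakly in `L²` to `l⁰` (weak convergence in `AC₀²`), then `zᵏ`
converges uniformly to `z⁰` on `Q`. -/
theorem weak_implies_uniform {n : ℕ}
    (l : ℕ → ℝ → ℝ → EuclideanSpace ℝ (Fin n))
    (l0 : ℝ → ℝ → EuclideanSpace ℝ (Fin n))
    (hl : ∀ k, MemLp (fun p : ℝ × ℝ => l k p.1 p.2) 2 (volume.restrict Q))
    (hl0 : MemLp (fun p : ℝ × ℝ => l0 p.1 p.2) 2 (volume.restrict Q))
    (hweak : ∀ g : ℝ → ℝ → EuclideanSpace ℝ (Fin n),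
        MemLp (fun p : ℝ × ℝ => g p.1 p.2) 2 (volume.restrict Q) →
        Filter.Tendsto
          (fun k => ∫ p in Q, inner ℝ (l k p.1 p.2) (g p.1 p.2) ∂volume)
          Filter.atTop
          (nhds (∫ p in Q, (inner ℝ (l0 p.1 p.2) (g p.1 p.2) : ℝ) ∂volume)))
    (z : ℕ → ℝ → ℝ → EuclideanSpace ℝ (Fin n))
    (z0 : ℝ → ℝ → EuclideanSpace ℝ (Fin n))
    (hz : ∀ k x y, z k x y = ∫ s in (0:ℝ)..x, ∫ t in (0:ℝ)..y, l k s t)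
    (hz0 : ∀ x y, z0 x y = ∫ s in (0:ℝ)..x, ∫ t in (0:ℝ)..y, l0 s t) :
    TendstoUniformlyOn (fun k (p : ℝ × ℝ) => z k p.1 p.2) (fun p => z0 p.1 p.2)
      Filter.atTop Q := by
  classical
  -- representation of z, z0 as set integrals over rectangles
  have hz' : ∀ k, ∀ x ∈ Icc (0:ℝ) 1, ∀ y ∈ Icc (0:ℝ) 1,
      z k x y = ∫ p in R x y, l k p.1 p.2 ∂volume := by
    intro k x hx y hy
    rw [hz k x y, repr_lemma ((hl k).integrable one_le_two) hx hy]
  have hz0' : ∀ x ∈ Icc (0:ℝ) 1, ∀ y ∈ Icc (0:ℝ) 1,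
      z0 x y = ∫ p in R x y, l0 p.1 p.2 ∂volume := by
    intro x hx y hy
    rw [hz0 x y, repr_lemma (hl0.integrable one_le_two) hx hy]
  obtain ⟨C, hC⟩ := uniform_bound l l0 hl hl0 hweak
  set D : ℝ := max C ((eLpNorm (fun p : ℝ × ℝ => l0 p.1 p.2) 2 (volume.restrict Q)).toReal) + 1
    with hD
  have hD0 : (0:ℝ) < D := by
    have : (0:ℝ) ≤ max C ((eLpNorm (fun p : ℝ × ℝ => l0 p.1 p.2) 2 (volume.restrict Q)).toReal) :=
      le_max_of_le_right ENNReal.toReal_nonneg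
    linarith
  have hDk : ∀ k, (eLpNorm (fun p : ℝ × ℝ => l k p.1 p.2) 2 (volume.restrict Q)).toReal ≤ D :=
    fun k => (hC k).trans (by rw [hD]; nlinarith [le_max_left C ((eLpNorm (fun p : ℝ × ℝ => l0 p.1 p.2) 2 (volume.restrict Q)).toReal)])
  have hD0' : (eLpNorm (fun p : ℝ × ℝ => l0 p.1 p.2) 2 (volume.restrict Q)).toReal ≤ D := by
    rw [hD]
    nlinarith [le_max_right C ((eLpNorm (fun p : ℝ × ℝ => l0 p.1 p.2) 2 (volume.restrict Q)).toReal)]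
  rw [Metric.tendstoUniformlyOn_iff]
  intro ε hε
  -- choose the grid size
  obtain ⟨N, hN⟩ := exists_nat_gt (2 * (3 * D / ε)^2)
  have hNpos : (0:ℝ) < N := lt_of_le_of_lt (by positivity) hN
  have hN0 : N ≠ 0 := by
    intro h; rw [h] at hNpos; simp at hNpos
  have hkey : D * (2 / N) ^ (1/2 : ℝ) < ε / 3 := by
    have h1 : (2 / N : ℝ) < (ε / (3 * D))^2 := by
      rw [div_lt_iff₀ hNpos]
      have hpos : (0:ℝ) < (ε/(3*D))^2 := by positivity
      have hident : (ε/(3*D))^2 * (3*D/ε)^2 = 1 := by field_simp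
      nlinarith [mul_lt_mul_of_pos_left hN hpos]
    have h2 : ((2 / N : ℝ)) ^ (1/2:ℝ) < ((ε / (3*D))^2) ^ (1/2:ℝ) :=
      Real.rpow_lt_rpow (by positivity) h1 (by norm_num)
    have h3 : ((ε / (3*D))^2 : ℝ) ^ (1/2:ℝ) = ε / (3*D) := by
      rw [← Real.rpow_natCast (ε / (3*D)) 2, ← Real.rpow_mul (by positivity)]
      norm_num
    rw [h3] at h2
    calc D * (2 / N) ^ (1/2 : ℝ) < D * (ε / (3*D)) :=
          mul_lt_mul_of_pos_left h2 hD0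
      _ = ε / 3 := by field_simp
  -- eventual closeness at grid points
  set grid : Finset (ℕ × ℕ) := Finset.range (N+1) ×ˢ Finset.range (N+1) with hgriddef
  have hmemIcc : ∀ i : ℕ, i ≤ N → ((i:ℝ)/N) ∈ Icc (0:ℝ) 1 := by
    intro i hi
    constructor
    · positivity
    · rw [div_le_one hNpos]; exact_mod_cast hi
  have hgrid : ∀ᶠ k in Filter.atTop, ∀ ij ∈ grid,
      dist (∫ p in R ((ij.1:ℝ)/N) ((ij.2:ℝ)/N), l k p.1 p.2 ∂volume)
        (∫ p in R ((ij.1:ℝ)/N) ((ij.2:ℝ)/N), l0 p.1 p.2 ∂volume) < ε/3 := by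
    rw [Filter.eventually_all_finset]
    rintro ⟨i, j⟩ hij
    rw [hgriddef, Finset.mem_product, Finset.mem_range, Finset.mem_range] at hij
    have hi := hmemIcc i (Nat.lt_succ_iff.mp hij.1)
    have hj := hmemIcc j (Nat.lt_succ_iff.mp hij.2)
    have := pointwise_tendsto l l0 hl hl0 hweak hi hj
    exact (Metric.tendsto_nhds.mp this (ε/3) (by positivity))
  filter_upwards [hgrid] with k hk
  rintro ⟨x, y⟩ ⟨hx, hy⟩
  simp only
  -- grid point below (x, y)
  set i : ℕ := ⌊(N:ℝ) * x⌋₊ with hi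
  set j : ℕ := ⌊(N:ℝ) * y⌋₊ with hj
  set a : ℝ := (i:ℝ)/N with haa
  set b : ℝ := (j:ℝ)/N with hbb
  have hiN : i ≤ N := by
    rw [hi]
    calc ⌊(N:ℝ) * x⌋₊ ≤ ⌊(N:ℝ)⌋₊ := Nat.floor_mono (by nlinarith [hx.1, hx.2])
      _ = N := Nat.floor_natCast N
  have hjN : j ≤ N := by
    rw [hj]
    calc ⌊(N:ℝ) * y⌋₊ ≤ ⌊(N:ℝ)⌋₊ := Nat.floor_mono (by nlinarith [hy.1, hy.2])
      _ = N := Nat.floor_natCast N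
  have hax : a ≤ x := by
    rw [haa, div_le_iff₀ hNpos, mul_comm]
    exact Nat.floor_le (by nlinarith [hx.1])
  have hby : b ≤ y := by
    rw [hbb, div_le_iff₀ hNpos, mul_comm]
    exact Nat.floor_le (by nlinarith [hy.1])
  have hxa : x - a ≤ 1/N := by
    have h := Nat.lt_floor_add_one ((N:ℝ) * x)
    have h1 : x ≤ ((i:ℝ)+1)/N := by
      rw [le_div_iff₀ hNpos]; rw [hi]; nlinarith
    have h2 : ((i:ℝ)+1)/N - (i:ℝ)/N = 1/N := by field_simp; ring
    rw [haa]; linarith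
  have hyb : y - b ≤ 1/N := by
    have h := Nat.lt_floor_add_one ((N:ℝ) * y)
    have h1 : y ≤ ((j:ℝ)+1)/N := by
      rw [le_div_iff₀ hNpos]; rw [hj]; nlinarith
    have h2 : ((j:ℝ)+1)/N - (j:ℝ)/N = 1/N := by field_simp; ring
    rw [hbb]; linarith
  have haI : a ∈ Icc (0:ℝ) 1 := hmemIcc i hiN
  have hbI : b ∈ Icc (0:ℝ) 1 := hmemIcc j hjN
  -- assemble the estimate
  have hgridpt : dist (∫ p in R a b, l k p.1 p.2 ∂volume)
      (∫ p in R a b, l0 p.1 p.2 ∂volume) < ε/3 := hk (i, j) (by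
    rw [hgriddef, Finset.mem_product, Finset.mem_range, Finset.mem_range]
    exact ⟨Nat.lt_succ_of_le hiN, Nat.lt_succ_of_le hjN⟩)
  have hsum : (x - a) + (y - b) ≤ 2/N := by
    have : (1/N : ℝ) + 1/N = 2/N := by ring
    linarith
  have hrpow : ((x - a) + (y - b)) ^ (1/2:ℝ) ≤ (2/N) ^ (1/2:ℝ) :=
    Real.rpow_le_rpow (by linarith) hsum (by norm_num)
  have hdk : ‖(∫ p in R x y, l k p.1 p.2 ∂volume) - ∫ p in R a b, l k p.1 p.2 ∂volume‖ < ε/3 := by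
    refine lt_of_le_of_lt ((diff_bound (hl k) haI.1 hax hx.2 hbI.1 hby hy.2).trans ?_) hkey
    exact mul_le_mul (hDk k) hrpow (Real.rpow_nonneg (by linarith) _) hD0.le
  have hd0 : ‖(∫ p in R x y, l0 p.1 p.2 ∂volume) - ∫ p in R a b, l0 p.1 p.2 ∂volume‖ < ε/3 := by
    refine lt_of_le_of_lt ((diff_bound hl0 haI.1 hax hx.2 hbI.1 hby hy.2).trans ?_) hkey
    exact mul_le_mul hD0' hrpow (Real.rpow_nonneg (by linarith) _) hD0.le
  rw [hz' k x hx y hy, hz0' x hx y hy, dist_eq_norm]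
  have tri := dist_triangle4 (∫ p in R x y, l0 p.1 p.2 ∂volume)
    (∫ p in R a b, l0 p.1 p.2 ∂volume) (∫ p in R a b, l k p.1 p.2 ∂volume)
    (∫ p in R x y, l k p.1 p.2 ∂volume)
  rw [← dist_eq_norm]
  calc dist (∫ p in R x y, l0 p.1 p.2 ∂volume) (∫ p in R x y, l k p.1 p.2 ∂volume)
      ≤ dist (∫ p in R x y, l0 p.1 p.2 ∂volume) (∫ p in R a b, l0 p.1 p.2 ∂volume)
        + dist (∫ p in R a b, l0 p.1 p.2 ∂volume) (∫ p in R a b, l k p.1 p.2 ∂volume)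
        + dist (∫ p in R a b, l k p.1 p.2 ∂volume) (∫ p in R x y, l k p.1 p.2 ∂volume) := tri
    _ < ε/3 + ε/3 + ε/3 := by
        refine add_lt_add (add_lt_add ?_ ?_) ?_
        · rw [dist_eq_norm]; exact hd0
        · rw [dist_comm]; exact hgridpt
        · rw [dist_comm, dist_eq_norm]; exact hdk
    _ = ε := by ring
end

section
/- Let Z be a real Banach space, V a real Hilbert space, and F : Z → V a C¹ map. Assume (a) for every v ∈ V the functional φ(z) = ½‖F(z) − v‖²_V satisfies the Palais–Smale condition, and (b) for every z ∈ Z and every v ∈ V the linear equation F′(z)h = v has a unique solution h ∈ Z. Then F is a bijection from Z onto V; in particular, for every v ∈ V the equation F(z) = v has exactly one solution. -/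
open Filter

section Auxiliary

open Metric Set

set_option linter.unusedSectionVars false

/-- Ekeland variational principle (weak form). -/
theorem my_ekeland {X : Type*} [MetricSpace X] [CompleteSpace X]
    (f : X → ℝ) (hf : LowerSemicontinuous f) (m : ℝ) (hm : ∀ x, m ≤ f x)
    (ε : ℝ) (hε : 0 < ε) (x₀ : X) :
    ∃ x, f x ≤ f x₀ ∧ ∀ y, f x ≤ f y + ε * dist y x := by
  classical
  -- the "better point" relation
  set S : X → Set X := fun y => {x | f x + ε * dist x y ≤ f y} with hS
  have hySy : ∀ y, y ∈ S y := by intro y; simp [hS]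
  have hSne : ∀ y, (f '' S y).Nonempty := fun y => ⟨f y, y, hySy y, rfl⟩
  have hSbdd : ∀ y, BddBelow (f '' S y) := by
    intro y; exact ⟨m, by rintro r ⟨x, -, rfl⟩; exact hm x⟩
  have step : ∀ y, ∃ x, (f x + ε * dist x y ≤ f y) ∧
      f x ≤ (sInf (f '' S y) + f y) / 2 := by
    intro y
    have hinf_le : sInf (f '' S y) ≤ f y :=
      csInf_le (hSbdd y) ⟨y, hySy y, rfl⟩
    rcases lt_or_eq_of_le hinf_le with h | h
    · have : sInf (f '' S y) < (sInf (f '' S y) + f y) / 2 := by linarith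
      obtain ⟨r, ⟨x, hx, rfl⟩, hr⟩ := exists_lt_of_csInf_lt (hSne y) this
      exact ⟨x, hx, le_of_lt hr⟩
    · refine ⟨y, hySy y, ?_⟩
      rw [← h]
      simp [dist_self]
  choose pick hpick1 hpick2 using step
  -- the iterative sequence
  set x : ℕ → X := fun n => Nat.rec x₀ (fun _ y => pick y) n with hx
  have hx0 : x 0 = x₀ := rfl
  have hxs : ∀ n, x (n + 1) = pick (x n) := fun n => rfl
  have h1 : ∀ n, f (x (n + 1)) + ε * dist (x (n + 1)) (x n) ≤ f (x n) := by
    intro n; rw [hxs]; exact hpick1 (x n)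
  have h2 : ∀ n, f (x (n + 1)) ≤ (sInf (f '' S (x n)) + f (x n)) / 2 := by
    intro n; rw [hxs]; exact hpick2 (x n)
  have hmono : ∀ n, f (x (n + 1)) ≤ f (x n) := by
    intro n
    have := h1 n
    nlinarith [dist_nonneg (x := x (n + 1)) (y := x n)]
  have hanti : Antitone fun n => f (x n) :=
    antitone_nat_of_succ_le hmono
  -- key telescoping estimate
  have key : ∀ n k, ε * dist (x n) (x (n + k)) ≤ f (x n) - f (x (n + k)) := by
    intro n k
    induction k with
    | zero => simp
    | succ k ih =>
      have h3 := h1 (n + k)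
      have htri : dist (x n) (x (n + (k+1))) ≤
          dist (x n) (x (n + k)) + dist (x (n + k + 1)) (x (n + k)) := by
        rw [show n + (k+1) = n + k + 1 from rfl]
        calc dist (x n) (x (n + k + 1)) ≤
            dist (x n) (x (n+k)) + dist (x (n+k)) (x (n+k+1)) := dist_triangle _ _ _
          _ = dist (x n) (x (n + k)) + dist (x (n + k + 1)) (x (n + k)) := by
              rw [dist_comm (x (n+k))]
      have : ε * dist (x n) (x (n + (k+1))) ≤
          ε * (dist (x n) (x (n + k)) + dist (x (n + k + 1)) (x (n + k))) :=
        mul_le_mul_of_nonneg_left htri (le_of_lt hε)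
      rw [show n + (k+1) = n + k + 1 from rfl] at *
      nlinarith
  have keyle : ∀ n m', n ≤ m' → ε * dist (x n) (x m') ≤ f (x n) - f (x m') := by
    intro n m' hnm
    obtain ⟨k, rfl⟩ := Nat.exists_eq_add_of_le hnm
    exact key n k
  -- convergence of values
  have hbdd : BddBelow (Set.range fun n => f (x n)) :=
    ⟨m, by rintro r ⟨n, rfl⟩; exact hm _⟩
  set L : ℝ := ⨅ n, f (x n) with hL
  have hfL : Tendsto (fun n => f (x n)) atTop (nhds L) :=
    tendsto_atTop_ciInf hanti hbdd
  have hLle : ∀ n, L ≤ f (x n) := fun n => ciInf_le hbdd n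
  -- Cauchy
  have hcauchy : CauchySeq x := by
    apply cauchySeq_of_le_tendsto_0 (b := fun n => (f (x n) - L) / ε)
    · intro n m' N hn hm'
      rcases le_total n m' with h | h
      · have := keyle n m' h
        have h4 : f (x n) ≤ f (x N) := hanti hn
        have h5 : L ≤ f (x m') := hLle m'
        rw [le_div_iff₀ hε]
        nlinarith
      · have := keyle m' n h
        have h4 : f (x m') ≤ f (x N) := hanti hm'
        have h5 : L ≤ f (x n) := hLle n
        rw [dist_comm, le_div_iff₀ hε]
        nlinarith
    · have : Tendsto (fun n => (f (x n) - L) / ε) atTop (nhds ((L - L) / ε)) :=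
        (hfL.sub_const L).div_const ε
      simpa using this
  obtain ⟨xb, hxb⟩ := cauchySeq_tendsto_of_complete hcauchy
  -- f xb ≤ L
  have hfxbL : f xb ≤ L := by
    by_contra hcon
    push_neg at hcon
    set y := (L + f xb) / 2 with hy
    have hy1 : y < f xb := by rw [hy]; linarith
    have hy2 : L < y := by rw [hy]; linarith
    have hev : ∀ᶠ n in atTop, y < f (x n) := hxb.eventually (hf xb y hy1)
    have : y ≤ L := ge_of_tendsto hfL (hev.mono fun n hn => le_of_lt hn)
    linarith
  -- xb is below every x n
  have hbelow : ∀ n, f xb + ε * dist xb (x n) ≤ f (x n) := by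
    intro n
    have hdist : Tendsto (fun m' => dist (x m') (x n)) atTop (nhds (dist xb (x n))) :=
      (hxb.dist tendsto_const_nhds)
    have hlim : Tendsto (fun m' => f (x m') + ε * dist (x m') (x n)) atTop
        (nhds (L + ε * dist xb (x n))) :=
      hfL.add ((hdist.const_mul ε))
    have hev : ∀ᶠ m' in atTop, f (x m') + ε * dist (x m') (x n) ≤ f (x n) := by
      filter_upwards [eventually_ge_atTop n] with m' hm'
      have := keyle n m' hm'
      rw [dist_comm]
      linarith
    have := le_of_tendsto hlim hev
    linarith [hfxbL]
  refine ⟨xb, ?_, ?_⟩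
  · have := hbelow 0
    rw [hx0] at this
    nlinarith [dist_nonneg (x := xb) (y := x₀)]
  · -- minimality
    intro y
    by_contra hcon
    push_neg at hcon
    have hyxb : f y + ε * dist y xb ≤ f xb := le_of_lt hcon
    -- y is below every x n
    have hyn : ∀ n, y ∈ S (x n) := by
      intro n
      have htri : dist y (x n) ≤ dist y xb + dist xb (x n) := dist_triangle _ _ _
      have : f y + ε * dist y (x n) ≤ f y + ε * (dist y xb + dist xb (x n)) :=
        by nlinarith
      calc f y + ε * dist y (x n) ≤ (f y + ε * dist y xb) + ε * dist xb (x n) := by linarith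
        _ ≤ f xb + ε * dist xb (x n) := by linarith
        _ ≤ f (x n) := hbelow n
    -- hence f y ≥ sInf bounds
    have hy2 : ∀ n, ε * dist y (x (n+1)) ≤ f (x n) - f (x (n+1)) := by
      intro n
      have hinf : sInf (f '' S (x n)) ≤ f y := csInf_le (hSbdd (x n)) ⟨y, hyn n, rfl⟩
      have h6 := h2 n
      have h7 := hyn (n+1)
      simp only [hS, Set.mem_setOf_eq] at h7
      linarith
    have hxb1 : Tendsto (fun n => x (n+1)) atTop (nhds xb) :=
      hxb.comp (tendsto_add_atTop_nat 1)
    have hlim2 : Tendsto (fun n => ε * dist y (x (n+1))) atTop (nhds (ε * dist y xb)) :=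
      (tendsto_const_nhds.dist hxb1).const_mul ε
    have hlim3 : Tendsto (fun n => f (x n) - f (x (n+1))) atTop (nhds (L - L)) :=
      hfL.sub (hfL.comp (tendsto_add_atTop_nat 1))
    have hd0 : ε * dist y xb ≤ L - L := le_of_tendsto_of_tendsto' hlim2 hlim3 hy2
    have hd : dist y xb = 0 := by nlinarith [dist_nonneg (x := y) (y := xb)]
    have : y = xb := by rwa [dist_eq_zero] at hd
    rw [this] at hcon
    simp [dist_self] at hcon

theorem norm_fderiv_le_of_min {Z : Type*} [NormedAddCommGroup Z] [NormedSpace ℝ Z]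
    (f : Z → ℝ) (L : Z →L[ℝ] ℝ) (x : Z) (hL : HasFDerivAt f L x)
    (ε : ℝ) (hε : 0 ≤ ε) (hmin : ∀ y, f x ≤ f y + ε * dist y x) : ‖L‖ ≤ ε := by
  have key : ∀ h : Z, -(ε * ‖h‖) ≤ L h := by
    intro h
    set ψ : ℝ → ℝ := fun t => f (x + t • h) + ε * ‖h‖ * t with hψ
    have hc : HasDerivAt (fun t : ℝ => x + t • h) h 0 := by
      simpa using ((hasDerivAt_id (0:ℝ)).smul_const h).const_add x
    have hfc : HasDerivAt (fun t : ℝ => f (x + t • h)) (L h) 0 := by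
      have hL' : HasFDerivAt f L (x + (0:ℝ) • h) := by simpa using hL
      have := hL'.comp_hasDerivAt (x := (0:ℝ)) hc
      exact this
    have hψd : HasDerivAt ψ (L h + ε * ‖h‖) 0 := by
      have := hfc.add ((hasDerivAt_id (0:ℝ)).const_mul (ε * ‖h‖)); rw [mul_one] at this; exact this
    have hge : ∀ t : ℝ, 0 < t → ψ 0 ≤ ψ t := by
      intro t ht
      have := hmin (x + t • h)
      have hd : dist (x + t • h) x = t * ‖h‖ := by
        rw [dist_eq_norm]
        simp [norm_smul, abs_of_pos ht]
      rw [hd] at this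
      simp only [hψ]
      simp only [zero_smul, add_zero, mul_zero]
      nlinarith
    have hslope : Tendsto (slope ψ 0) (nhdsWithin 0 {(0:ℝ)}ᶜ) (nhds (L h + ε * ‖h‖)) :=
      hasDerivAt_iff_tendsto_slope.mp hψd
    have hslope' : Tendsto (slope ψ 0) (nhdsWithin 0 (Set.Ioi 0)) (nhds (L h + ε * ‖h‖)) :=
      hslope.mono_left (nhdsWithin_mono 0 (fun t ht => ne_of_gt ht))
    have hpos : ∀ᶠ t in nhdsWithin (0:ℝ) (Set.Ioi 0), 0 ≤ slope ψ 0 t := by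
      filter_upwards [self_mem_nhdsWithin] with t ht
      have h0 : (0:ℝ) < t := ht
      rw [slope_def_field]
      have := hge t h0
      have : 0 ≤ (ψ t - ψ 0) / (t - 0) := by
        apply div_nonneg (by linarith) (by linarith)
      simpa [div_eq_iff, sub_eq_iff_eq_add] using this
    have : 0 ≤ L h + ε * ‖h‖ := ge_of_tendsto hslope' hpos
    linarith
  apply ContinuousLinearMap.opNorm_le_bound _ hε
  intro y
  have h1 := key y
  have h2 := key (-y)
  rw [map_neg, norm_neg] at h2
  rw [Real.norm_eq_abs]
  rw [abs_le]
  constructor <;> nlinarith [norm_nonneg y]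

section MiniMax

variable {Z : Type*} [NormedAddCommGroup Z] [NormedSpace ℝ Z]


theorem minimax_step
    (φ : Z → ℝ) (φ' : Z → Z →L[ℝ] ℝ)
    (hd : ∀ z, HasFDerivAt φ (φ' z) z)
    (hφ'c : Continuous φ')
    (γ : C(unitInterval, Z))
    (hγ0 : φ (γ 0) = 0) (hγ1 : φ (γ 1) = 0)
    (ε : ℝ) (hε : 0 < ε)
    (Iγ : ℝ) (hIγ : Iγ = sSup (Set.range fun t => φ (γ t)))
    (h2ε : 2 * ε < Iγ)
    (heke : ∀ γ' : C(unitInterval, Z), γ' 0 = γ 0 → γ' 1 = γ 1 →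
        Iγ ≤ sSup (Set.range fun t => φ (γ' t)) + ε * dist γ' γ) :
    ∃ t, Iγ - ε ≤ φ (γ t) ∧ ‖φ' (γ t)‖ ≤ 3 * ε := by
  classical
  have hφc : Continuous φ :=
    continuous_iff_continuousAt.mpr fun z => (hd z).differentiableAt.continuousAt
  have hφγc : Continuous fun t => φ (γ t) := hφc.comp γ.continuous
  have hne : (Set.range fun t => φ (γ t)).Nonempty := ⟨φ (γ 0), 0, rfl⟩
  have hcpt : IsCompact (Set.range fun t => φ (γ t)) := isCompact_range hφγc
  have hbdd : BddAbove (Set.range fun t => φ (γ t)) := hcpt.bddAbove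
  have hsup_mem : Iγ ∈ Set.range fun t => φ (γ t) := by
    rw [hIγ]; exact hcpt.sSup_mem hne
  obtain ⟨tmax, htmax⟩ := hsup_mem
  have hle_sup : ∀ t, φ (γ t) ≤ Iγ := by
    intro t; rw [hIγ]; exact le_csSup hbdd ⟨t, rfl⟩
  by_contra hcon
  push_neg at hcon
  -- the "high" set A
  set A : Set unitInterval := {t | Iγ - ε ≤ φ (γ t)} with hA
  have hAclosed : IsClosed A := isClosed_le continuous_const hφγc
  have hAcpt : IsCompact A := hAclosed.isCompact
  have hAne : A.Nonempty := ⟨tmax, by simp only [hA, mem_setOf_eq, htmax]; linarith⟩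
  -- directions of steep descent
  have hdir : ∀ t : unitInterval, ∃ h : Z, ‖h‖ ≤ 1 ∧ (t ∈ A → φ' (γ t) h < -(3 * ε)) := by
    intro t
    by_cases ht : t ∈ A
    · have h3 : 3 * ε < ‖φ' (γ t)‖ := hcon t ht
      by_contra hc
      push_neg at hc
      have hb : ∀ h : Z, ‖h‖ ≤ 1 → -(3 * ε) ≤ φ' (γ t) h := fun h hh => (hc h hh).2
      have : ‖φ' (γ t)‖ ≤ 3 * ε := by
        apply ContinuousLinearMap.opNorm_le_bound _ (by linarith)
        intro x
        rcases eq_or_ne x 0 with rfl | hx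
        · simp
        · have hxn : (0:ℝ) < ‖x‖ := norm_pos_iff.mpr hx
          have hu : ‖‖x‖⁻¹ • x‖ ≤ 1 := by
            rw [norm_smul, norm_inv, norm_norm, inv_mul_cancel₀ (ne_of_gt hxn)]
          have h1 := hb (‖x‖⁻¹ • x) hu
          have h2 := hb (-(‖x‖⁻¹ • x)) (by rwa [norm_neg])
          rw [map_neg] at h2
          rw [map_smul, smul_eq_mul] at h1 h2
          have e1 : ‖x‖ * (‖x‖⁻¹ * (φ' (γ t)) x) = (φ' (γ t)) x := by
            field_simp
          have l1 : ‖x‖ * (-(3*ε)) ≤ (φ' (γ t)) x := by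
            rw [← e1]; exact mul_le_mul_of_nonneg_left h1 hxn.le
          have h2' : ‖x‖⁻¹ * (φ' (γ t)) x ≤ 3*ε := by linarith
          have l2 : (φ' (γ t)) x ≤ ‖x‖ * (3*ε) := by
            rw [← e1]; exact mul_le_mul_of_nonneg_left h2' hxn.le
          rw [Real.norm_eq_abs, abs_le]
          constructor <;> nlinarith
      linarith
    · exact ⟨0, by simp, fun h => absurd h ht⟩
  choose H hH1 hH2 using hdir
  -- the open cover
  set U : unitInterval → Set unitInterval :=
    fun t => {s | φ' (γ s) (H t) < -(2 * ε) ∧ Iγ - 2 * ε < φ (γ s)} with hU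
  have hUopen : ∀ t, IsOpen (U t) := by
    intro t
    apply IsOpen.inter
    · exact isOpen_lt ((hφ'c.comp γ.continuous).clm_apply continuous_const) continuous_const
    · exact isOpen_lt continuous_const hφγc
  have hmemU : ∀ t ∈ A, t ∈ U t := by
    intro t ht
    refine ⟨by have := hH2 t ht; linarith, ?_⟩
    have : Iγ - ε ≤ φ (γ t) := ht
    linarith
  have hcover : A ⊆ ⋃ t ∈ A, U t := fun t ht => mem_iUnion₂.mpr ⟨t, ht, hmemU t ht⟩
  obtain ⟨T, hTA, hTfin, hTcover⟩ :=
    hAcpt.elim_finite_subcover_image (fun t _ => hUopen t) hcover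
  set Tf := hTfin.toFinset with hTf
  have hTfc : ∀ t, t ∈ Tf ↔ t ∈ T := fun t => hTfin.mem_toFinset
  -- 0 is outside every U t
  have hIγpos : 0 < Iγ - 2 * ε := by linarith
  have h0notU : ∀ t, (0 : unitInterval) ∉ U t := by
    intro t ht
    have := ht.2
    rw [hγ0] at this
    linarith
  have hUcne : ∀ t, ((U t)ᶜ).Nonempty := fun t => ⟨0, h0notU t⟩
  -- the partition functions
  set ρ : unitInterval → unitInterval → ℝ := fun t s => infDist s (U t)ᶜ with hρ
  have hρcont : ∀ t, Continuous (ρ t) := fun t => continuous_infDist_pt _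
  have hρnonneg : ∀ t s, 0 ≤ ρ t s := fun t s => infDist_nonneg
  have hρpos : ∀ t s, s ∈ U t → 0 < ρ t s := by
    intro t s hs
    exact ((hUopen t).isClosed_compl.notMem_iff_infDist_pos (hUcne t)).mp (by simpa using hs)
  have hρzero : ∀ t s, s ∉ U t → ρ t s = 0 := by
    intro t s hs
    exact infDist_zero_of_mem (by simpa using hs)
  set sg : unitInterval → ℝ := fun s => ∑ t ∈ Tf, ρ t s with hsg
  have hsgcont : Continuous sg := continuous_finset_sum _ fun t _ => hρcont t
  have hsgnonneg : ∀ s, 0 ≤ sg s := fun s => Finset.sum_nonneg fun t _ => hρnonneg t s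
  have hsgposA : ∀ s ∈ A, 0 < sg s := by
    intro s hs
    obtain ⟨t, ht, hsU⟩ := mem_iUnion₂.mp (hTcover hs)
    exact Finset.sum_pos' (fun t' _ => hρnonneg t' s)
      ⟨t, (hTfc t).mpr ht, hρpos t s hsU⟩
  obtain ⟨t₀, ht₀A, ht₀min⟩ := hAcpt.exists_isMinOn hAne hsgcont.continuousOn
  set sg0 : ℝ := sg t₀ with hsg0
  have hsg0pos : 0 < sg0 := hsgposA t₀ ht₀A
  have hsg0le : ∀ s ∈ A, sg0 ≤ sg s := fun s hs => ht₀min hs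
  set den : unitInterval → ℝ := fun s => max (sg s) (sg0 / 2) with hden
  have hdenpos : ∀ s, 0 < den s := fun s => lt_max_of_lt_right (by linarith)
  have hdencont : Continuous den := hsgcont.max continuous_const
  have hdenge : ∀ s, sg s ≤ den s := fun s => le_max_left _ _
  have hdenA : ∀ s ∈ A, den s = sg s := by
    intro s hs
    exact max_eq_left (by have := hsg0le s hs; linarith)
  -- the cutoff
  set θ : unitInterval → ℝ := fun s => min 1 (max 0 ((2 / ε) * (φ (γ s) - (Iγ - ε)))) with hθ
  have hθcont : Continuous θ :=
    continuous_const.min (continuous_const.max (continuous_const.mul (hφγc.sub continuous_const)))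
  have h2ε' : (0:ℝ) < 2 / ε := by positivity
  have hθ01 : ∀ s, 0 ≤ θ s ∧ θ s ≤ 1 := by
    intro s
    exact ⟨le_min zero_le_one (le_max_left _ _), min_le_left _ _⟩
  have hθpos : ∀ s, 0 < θ s → Iγ - ε < φ (γ s) := by
    intro s hs
    simp only [hθ, lt_min_iff] at hs
    have h1 : 0 < max 0 ((2 / ε) * (φ (γ s) - (Iγ - ε))) := hs.2
    have h2 : 0 < (2 / ε) * (φ (γ s) - (Iγ - ε)) := by
      rcases le_or_gt ((2 / ε) * (φ (γ s) - (Iγ - ε))) 0 with h | h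
      · rw [max_eq_left h] at h1; exact absurd h1 (lt_irrefl 0)
      · exact h
    nlinarith
  have hθ1 : ∀ s, Iγ - ε/2 ≤ φ (γ s) → θ s = 1 := by
    intro s hs
    have hx : (1:ℝ) ≤ (2 / ε) * (φ (γ s) - (Iγ - ε)) := by
      rw [div_mul_eq_mul_div, le_div_iff₀ hε]
      nlinarith
    simp only [hθ]
    rw [max_eq_right (by linarith), min_eq_left hx]
  have hθ0 : ∀ s, φ (γ s) ≤ Iγ - ε → θ s = 0 := by
    intro s hs
    have hx : (2 / ε) * (φ (γ s) - (Iγ - ε)) ≤ 0 := by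
      apply mul_nonpos_of_nonneg_of_nonpos h2ε'.le
      linarith
    simp only [hθ]
    rw [max_eq_left hx, min_eq_right zero_le_one]
  -- the deformation vector field
  set Hf : unitInterval → Z := fun s => θ s • ∑ t ∈ Tf, (ρ t s / den s) • H t with hHf
  have hHfcont : Continuous Hf :=
    hθcont.smul (continuous_finset_sum _ fun t _ =>
      ((hρcont t).div hdencont fun s => ne_of_gt (hdenpos s)).smul continuous_const)
  have hHfnorm : ∀ s, ‖Hf s‖ ≤ θ s := by
    intro s
    have hw : ‖∑ t ∈ Tf, (ρ t s / den s) • H t‖ ≤ 1 := by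
      have c1 : ‖∑ t ∈ Tf, (ρ t s / den s) • H t‖ ≤ ∑ t ∈ Tf, ρ t s / den s := by
        refine le_trans (norm_sum_le _ _) (Finset.sum_le_sum fun t _ => ?_)
        rw [norm_smul, Real.norm_eq_abs,
          abs_of_nonneg (div_nonneg (hρnonneg t s) (hdenpos s).le)]
        calc (ρ t s / den s) * ‖H t‖ ≤ (ρ t s / den s) * 1 :=
              mul_le_mul_of_nonneg_left (hH1 t) (div_nonneg (hρnonneg t s) (hdenpos s).le)
          _ = ρ t s / den s := mul_one _
      have c2 : ∑ t ∈ Tf, ρ t s / den s = sg s / den s := by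
        rw [hsg, ← Finset.sum_div]
      have c3 : sg s / den s ≤ 1 := div_le_one_of_le₀ (hdenge s) (hdenpos s).le
      linarith
    rw [hHf, norm_smul, Real.norm_eq_abs, abs_of_nonneg (hθ01 s).1]
    calc θ s * ‖∑ t ∈ Tf, (ρ t s / den s) • H t‖ ≤ θ s * 1 :=
          mul_le_mul_of_nonneg_left hw (hθ01 s).1
      _ = θ s := mul_one _
  have hkey : ∀ s, φ' (γ s) (Hf s) ≤ -(2*ε) * θ s := by
    intro s
    rcases eq_or_lt_of_le (hθ01 s).1 with h0 | hpos
    · have hHs : Hf s = 0 := by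
        simp only [hHf]
        rw [← h0, zero_smul]
      rw [hHs, map_zero, ← h0, mul_zero]
    · have hsA : s ∈ A := by
        have := hθpos s hpos
        simp only [hA, mem_setOf_eq]
        linarith
      have hdenseq : den s = sg s := hdenA s hsA
      have hsgpos : 0 < sg s := hsgposA s hsA
      have hexp : φ' (γ s) (Hf s) = θ s * ∑ t ∈ Tf, (ρ t s / sg s) * φ' (γ s) (H t) := by
        rw [hHf, map_smul, map_sum, smul_eq_mul, hdenseq]
        congr 1
        refine Finset.sum_congr rfl fun t _ => ?_
        rw [map_smul, smul_eq_mul]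
      have hsum : ∑ t ∈ Tf, (ρ t s / sg s) * φ' (γ s) (H t) ≤ -(2*ε) := by
        have hterm : ∀ t ∈ Tf, (ρ t s / sg s) * φ' (γ s) (H t)
            ≤ (ρ t s / sg s) * (-(2*ε)) := by
          intro t _
          rcases eq_or_lt_of_le (hρnonneg t s) with h0' | hρp
          · rw [← h0', zero_div, zero_mul, zero_mul]
          · have hsU : s ∈ U t := by
              by_contra hns
              rw [hρzero t s hns] at hρp
              exact absurd hρp (lt_irrefl 0)
            exact mul_le_mul_of_nonneg_left (le_of_lt hsU.1)
              (div_nonneg (hρnonneg t s) hsgpos.le)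
        calc ∑ t ∈ Tf, (ρ t s / sg s) * φ' (γ s) (H t)
            ≤ ∑ t ∈ Tf, (ρ t s / sg s) * (-(2*ε)) := Finset.sum_le_sum hterm
          _ = (sg s / sg s) * (-(2*ε)) := by rw [← Finset.sum_mul, hsg, ← Finset.sum_div]
          _ = -(2*ε) := by rw [div_self (ne_of_gt hsgpos), one_mul]
      rw [hexp]
      calc θ s * ∑ t ∈ Tf, (ρ t s / sg s) * φ' (γ s) (H t) ≤ θ s * (-(2*ε)) :=
            mul_le_mul_of_nonneg_left hsum (hθ01 s).1
        _ = -(2*ε) * θ s := mul_comm _ _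
  have hHf0 : Hf 0 = 0 := by
    have h00 : θ 0 = 0 := hθ0 0 (by rw [hγ0]; linarith)
    simp only [hHf]
    rw [h00, zero_smul]
  have hHf1 : Hf 1 = 0 := by
    have h11 : θ 1 = 0 := hθ0 1 (by rw [hγ1]; linarith)
    simp only [hHf]
    rw [h11, zero_smul]
  -- tube lemma: a uniform smallness scale
  set g2 : ℝ × unitInterval → ℝ := fun p => φ' (γ p.2 + p.1 • Hf p.2) (Hf p.2) with hg2
  have hcurve : Continuous fun p : ℝ × unitInterval => γ p.2 + p.1 • Hf p.2 :=
    (γ.continuous.comp continuous_snd).add (continuous_fst.smul (hHfcont.comp continuous_snd))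
  have hg2c : Continuous g2 := (hφ'c.comp hcurve).clm_apply (hHfcont.comp continuous_snd)
  set W : Set (ℝ × unitInterval) := {p | g2 p < g2 (0, p.2) + ε/2} with hW
  have hWopen : IsOpen W := by
    apply isOpen_lt hg2c
    exact (hg2c.comp (continuous_const.prodMk continuous_snd)).add continuous_const
  have hWsub : {(0:ℝ)} ×ˢ (univ : Set unitInterval) ⊆ W := by
    rintro ⟨s', t⟩ ⟨hs', -⟩
    simp only [mem_singleton_iff] at hs'
    subst hs'
    simp only [hW, mem_setOf_eq]
    linarith
  obtain ⟨u, v, huo, hvo, hu0, hvuniv, huv⟩ :=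
    generalized_tube_lemma isCompact_singleton isCompact_univ hWopen hWsub
  obtain ⟨s₁, hs₁, hball₁⟩ := Metric.isOpen_iff.mp huo 0 (hu0 rfl)
  set s : ℝ := min (s₁/2) (1/6) with hs
  have hspos : 0 < s := lt_min (by linarith) (by norm_num)
  have hs16 : s ≤ 1/6 := min_le_right _ _
  have hss₁ : ∀ u' : ℝ, 0 ≤ u' → u' ≤ s → u' ∈ u := by
    intro u' h0 h1
    apply hball₁
    rw [mem_ball, Real.dist_eq, sub_zero, abs_of_nonneg h0]
    have : s ≤ s₁ / 2 := min_le_left _ _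
    linarith
  have hWmem : ∀ (u' : ℝ) (t : unitInterval), 0 ≤ u' → u' ≤ s → (u', t) ∈ W := by
    intro u' t h0 h1
    exact huv ⟨hss₁ u' h0 h1, hvuniv trivial⟩
  -- pointwise decay estimate
  have hg20 : ∀ t, g2 (0, t) = φ' (γ t) (Hf t) := by
    intro t
    simp only [hg2]
    rw [zero_smul, add_zero]
  have hpoint : ∀ t, φ (γ t + s • Hf t) ≤ φ (γ t) + s * (φ' (γ t) (Hf t) + ε/2) := by
    intro t
    set ψ : ℝ → ℝ := fun u' => φ (γ t + u' • Hf t) - (g2 (0, t) + ε/2) * u' with hψ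
    have hψd : ∀ u', HasDerivAt ψ (g2 (u', t) - (g2 (0, t) + ε/2)) u' := by
      intro u'
      have hc : HasDerivAt (fun u' : ℝ => γ t + u' • Hf t) (Hf t) u' := by
        simpa using ((hasDerivAt_id u').smul_const (Hf t)).const_add (γ t)
      have hfc : HasDerivAt (fun u' : ℝ => φ (γ t + u' • Hf t)) (g2 (u', t)) u' := by
        have := (hd (γ t + u' • Hf t)).comp_hasDerivAt (x := u') hc
        exact this
      have := hfc.sub ((hasDerivAt_id u').const_mul (g2 (0, t) + ε/2)); rw [mul_one] at this; exact this
    have hcontψ : Continuous ψ := by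
      apply Continuous.sub
      · exact hφc.comp (continuous_const.add ((continuous_id.smul continuous_const)))
      · exact continuous_const.mul continuous_id
    have hanti : StrictAntiOn ψ (Icc 0 s) := by
      apply strictAntiOn_of_deriv_neg (convex_Icc 0 s) hcontψ.continuousOn
      intro u' hu'
      rw [interior_Icc] at hu'
      rw [(hψd u').deriv]
      have hw : (u', t) ∈ W := hWmem u' t hu'.1.le hu'.2.le
      simp only [hW, mem_setOf_eq] at hw
      linarith
    have h0s : (0:ℝ) ∈ Icc (0:ℝ) s := ⟨le_refl _, hspos.le⟩
    have hss : s ∈ Icc (0:ℝ) s := ⟨hspos.le, le_refl _⟩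
    have := hanti h0s hss hspos
    simp only [hψ, zero_smul, add_zero, mul_zero, sub_zero] at this
    rw [hg20 t] at this
    linarith
  -- the perturbed path
  set γ' : C(unitInterval, Z) := ⟨fun t => γ t + s • Hf t,
    γ.continuous.add (continuous_const.smul hHfcont)⟩ with hγ'
  have hγ't : ∀ t, γ' t = γ t + s • Hf t := fun t => rfl
  have he0 : γ' 0 = γ 0 := by rw [hγ't, hHf0, smul_zero, add_zero]
  have he1 : γ' 1 = γ 1 := by rw [hγ't, hHf1, smul_zero, add_zero]
  clear hHf hg2 hW hγ' hθ hs
  clear_value ρ sg sg0 den θ Hf g2 W s γ'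
  have hbound : ∀ t, φ (γ' t) ≤ Iγ - (3/2) * (ε * s) := by
    intro t
    have h1 := hpoint t
    have h2 := hkey t
    rw [← hγ't] at h1
    by_cases hθt : θ t = 1
    · rw [hθt, mul_one] at h2
      nlinarith [hle_sup t, hspos.le]
    · have hlt : θ t < 1 := lt_of_le_of_ne (hθ01 t).2 hθt
      have hφlt : φ (γ t) < Iγ - ε/2 := by
        by_contra hge
        push_neg at hge
        exact hθt (hθ1 t hge)
      have h8 : 0 ≤ 2 * ε * θ t := mul_nonneg (by linarith) (hθ01 t).1
      have hd0 : φ' (γ t) (Hf t) ≤ 0 := le_trans h2 (by linarith)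
      have h5 : s * (φ' (γ t) (Hf t)) ≤ 0 :=
        mul_nonpos_of_nonneg_of_nonpos hspos.le hd0
      have h6 : s * ε ≤ (1/6) * ε := mul_le_mul_of_nonneg_right hs16 hε.le
      have h7 : s * (φ' (γ t) (Hf t) + ε/2)
          = s * (φ' (γ t) (Hf t)) + s * ε / 2 := by ring
      have h9 : (3/2) * (ε * s) = (3/2) * (s * ε) := by ring
      rw [h7] at h1
      rw [h9]
      linarith
  have hsup' : sSup (Set.range fun t => φ (γ' t)) ≤ Iγ - (3/2) * (ε * s) :=
    csSup_le ⟨φ (γ' 0), 0, rfl⟩ (by rintro x ⟨t, rfl⟩; exact hbound t)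
  have hdist : dist γ' γ ≤ s := by
    rw [ContinuousMap.dist_le hspos.le]
    intro t
    rw [hγ't, dist_eq_norm, add_sub_cancel_left, norm_smul, Real.norm_eq_abs,
      abs_of_pos hspos]
    nlinarith [hHfnorm t, (hθ01 t).2]
  have hfin := heke γ' he0 he1
  have : ε * dist γ' γ ≤ ε * s := mul_le_mul_of_nonneg_left hdist hε.le
  linarith [mul_pos hε hspos]

end MiniMax

section PhiLemmas

variable {Z : Type*} [NormedAddCommGroup Z] [NormedSpace ℝ Z] [CompleteSpace Z]
variable {V : Type*} [NormedAddCommGroup V] [InnerProductSpace ℝ V] [CompleteSpace V]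


theorem hasFDerivAt_phi (F : Z → V) (hF : ContDiff ℝ 1 F) (v : V) (z : Z) :
    HasFDerivAt (fun z => (1/2 : ℝ) * ‖F z - v‖ ^ 2)
      ((innerSL ℝ (F z - v)).comp (fderiv ℝ F z)) z := by
  have hd : HasFDerivAt F (fderiv ℝ F z) z :=
    (hF.differentiable one_ne_zero z).hasFDerivAt
  have hG : HasFDerivAt (fun z => F z - v) (fderiv ℝ F z) z := hd.sub_const v
  have h2 := hG.norm_sq.const_mul ((1/2 : ℝ))
  refine h2.congr_fderiv ?_
  symm
  ext h
  show _ = ((1/2 : ℝ) • (2 • ((innerSL ℝ) (F z - v)).comp (fderiv ℝ F z))) h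
  simp [two_smul]
  ring

theorem fderiv_phi (F : Z → V) (hF : ContDiff ℝ 1 F) (v : V) (z : Z) :
    fderiv ℝ (fun z => (1/2 : ℝ) * ‖F z - v‖ ^ 2) z
      = (innerSL ℝ (F z - v)).comp (fderiv ℝ F z) :=
  (hasFDerivAt_phi F hF v z).fderiv

theorem continuous_phi' (F : Z → V) (hF : ContDiff ℝ 1 F) (v : V) :
    Continuous fun z => (innerSL ℝ (F z - v)).comp (fderiv ℝ F z) := by
  have c1 : Continuous fun z => innerSL ℝ (F z - v) :=
    (innerSL ℝ).continuous.comp ((hF.continuous).sub continuous_const)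
  exact c1.clm_comp (hF.continuous_fderiv one_ne_zero)

theorem crit_solves (F : Z → V) (hF : ContDiff ℝ 1 F)
    (hlin : ∀ z : Z, ∀ v : V, ∃! h : Z, fderiv ℝ F z h = v) (v : V) (z : Z)
    (hz : fderiv ℝ (fun z => (1/2 : ℝ) * ‖F z - v‖ ^ 2) z = 0) : F z = v := by
  rw [fderiv_phi F hF v z] at hz
  obtain ⟨h, hh, -⟩ := hlin z (F z - v)
  have : (((innerSL ℝ) (F z - v)).comp (fderiv ℝ F z)) h = (0 : Z →L[ℝ] ℝ) h := by rw [hz]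
  simp only [ContinuousLinearMap.coe_comp', Function.comp_apply, innerSL_apply_apply,
    ContinuousLinearMap.zero_apply] at this
  rw [hh] at this
  have h0 : F z - v = 0 := by
    rwa [inner_self_eq_zero (𝕜 := ℝ)] at this
  rwa [sub_eq_zero] at h0


theorem mountain_geometry (F : Z → V) (hF : ContDiff ℝ 1 F)
    (hlin : ∀ z : Z, ∀ v : V, ∃! h : Z, fderiv ℝ F z h = v) (a b : Z) (hab : a ≠ b) :
    ∃ r ρ : ℝ, 0 < r ∧ 0 < ρ ∧ r < ‖b - a‖ ∧
      ∀ z : Z, ‖z - a‖ = r → ρ ≤ ‖F z - F a‖ := by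
  -- the derivative at a is a continuous linear equivalence
  set f' := fderiv ℝ F a with hf'
  have hinj : Function.Injective f' := by
    intro h₁ h₂ hh
    obtain ⟨h, -, huniq⟩ := hlin a (f' h₂)
    rw [(huniq h₁ hh), (huniq h₂ rfl)]
  have hsurj : Function.Surjective f' := fun v => ⟨(hlin a v).exists.choose, (hlin a v).exists.choose_spec⟩
  have hker : LinearMap.ker (f' : Z →ₗ[ℝ] V) = ⊥ := LinearMap.ker_eq_bot.mpr hinj
  have hrange : LinearMap.range (f' : Z →ₗ[ℝ] V) = ⊤ := LinearMap.range_eq_top.mpr hsurj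
  set e := ContinuousLinearEquiv.ofBijective f' hker hrange with he
  have hecoe : (e : Z →L[ℝ] V) = f' := ContinuousLinearEquiv.coe_ofBijective f' hker hrange
  have hstrict : HasStrictFDerivAt F (e : Z →L[ℝ] V) a := by
    rw [hecoe]
    exact (hF.contDiffAt).hasStrictFDerivAt one_ne_zero
  set P := hstrict.toOpenPartialHomeomorph F with hP
  have hPcoe : (P : Z → V) = F := hstrict.toOpenPartialHomeomorph_coe
  have haP : a ∈ P.source := hstrict.mem_toOpenPartialHomeomorph_source
  have hFaP : F a ∈ P.target := by
    have := P.map_source haP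
    rwa [hPcoe] at this
  obtain ⟨r', hr', hball⟩ := Metric.isOpen_iff.mp P.open_source a haP
  have hba : (0:ℝ) < ‖b - a‖ := by
    rw [norm_pos_iff, sub_ne_zero]; exact Ne.symm hab
  set r : ℝ := min (r'/2) (‖b - a‖/2) with hr
  have hrpos : 0 < r := lt_min (by linarith) (by linarith)
  have hrr' : r < r' := lt_of_le_of_lt (min_le_left _ _) (by linarith)
  have hrba : r < ‖b - a‖ := lt_of_le_of_lt (min_le_right _ _) (by linarith)
  -- continuity of the inverse
  have hopen : IsOpen (P.target ∩ P.symm ⁻¹' (ball a r)) :=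
    P.isOpen_inter_preimage_symm isOpen_ball
  have hmem : F a ∈ P.target ∩ P.symm ⁻¹' (ball a r) := by
    refine ⟨hFaP, ?_⟩
    have : P.symm (F a) = a := by
      have := P.left_inv haP
      rwa [hPcoe] at this
    simp [this, mem_ball, hrpos]
  obtain ⟨ρ, hρ, hρball⟩ := Metric.isOpen_iff.mp hopen (F a) hmem
  refine ⟨r, ρ, hrpos, hρ, hrba, ?_⟩
  intro z hz
  by_contra hcon
  push_neg at hcon
  have hFz : F z ∈ ball (F a) ρ := by
    rw [mem_ball, dist_eq_norm]; exact hcon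
  obtain ⟨hFzt, hFzb⟩ := hρball hFz
  set w := P.symm (F z) with hw
  have hwsrc : w ∈ P.source := P.map_target hFzt
  have hPw : P w = F z := P.right_inv hFzt
  have hzs : z ∈ P.source := hball (by rw [mem_ball, dist_eq_norm]; rw [hz]; exact hrr')
  have hPz : P z = F z := by rw [hPcoe]
  have hzw : z = w := P.injOn hzs hwsrc (by rw [hPz, hPw])
  have : dist w a < r := hFzb
  rw [← hzw, dist_eq_norm, hz] at this
  exact lt_irrefl r this

end PhiLemmas

end Auxiliary

open Metric Set in
/-- Theorem 2.1 (global diffeomorphism theorem, existence/uniqueness part): if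
`F : Z → V` is `C¹`, for every `v` the functional `φ(z) = ½‖F(z) − v‖²` satisfies the
Palais–Smale condition, and for every `z` the equation `F′(z)h = v` has a unique solution
for each `v`, then `F` is a bijection of `Z` onto `V`. -/
theorem global_invertibility
    {Z : Type*} [NormedAddCommGroup Z] [NormedSpace ℝ Z] [CompleteSpace Z]
    {V : Type*} [NormedAddCommGroup V] [InnerProductSpace ℝ V] [CompleteSpace V]
    (F : Z → V) (hF : ContDiff ℝ 1 F)
    (hPS : ∀ v : V,
      ∀ zseq : ℕ → Z,
        (∃ c : ℝ, ∀ k, |(1/2 : ℝ) * ‖F (zseq k) - v‖ ^ 2| ≤ c) →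
        Tendsto (fun k => fderiv ℝ (fun z => (1/2 : ℝ) * ‖F z - v‖ ^ 2) (zseq k))
          atTop (nhds 0) →
        ∃ zbar ∈ closure (Set.range zseq),
          fderiv ℝ (fun z => (1/2 : ℝ) * ‖F z - v‖ ^ 2) zbar = 0)
    (hlin : ∀ z : Z, ∀ v : V, ∃! h : Z, fderiv ℝ F z h = v) :
    Function.Bijective F ∧ ∀ v : V, ∃! z : Z, F z = v := by
  have hφc : ∀ v : V, Continuous fun z => (1/2 : ℝ) * ‖F z - v‖ ^ 2 := by
    intro v
    exact continuous_const.mul (((hF.continuous.sub continuous_const).norm).pow 2)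
  have hφ0 : ∀ (v : V) (z : Z), 0 ≤ (1/2 : ℝ) * ‖F z - v‖ ^ 2 := by
    intro v z; positivity
  have hten : Tendsto (fun n : ℕ => 1 / ((n:ℝ) + 1)) atTop (nhds 0) :=
    tendsto_one_div_add_atTop_nhds_zero_nat
  -- Surjectivity
  have hsurj : Function.Surjective F := by
    intro v
    have hz : ∀ n : ℕ, ∃ z : Z, (1/2 : ℝ) * ‖F z - v‖ ^ 2 ≤ (1/2 : ℝ) * ‖F 0 - v‖ ^ 2 ∧
        ∀ y, (1/2 : ℝ) * ‖F z - v‖ ^ 2 ≤ (1/2 : ℝ) * ‖F y - v‖ ^ 2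
          + (1 / ((n:ℝ)+1)) * dist y z := by
      intro n
      exact my_ekeland _ (hφc v).lowerSemicontinuous 0 (hφ0 v) _ (by positivity) 0
    choose zs hz1 hz2 using hz
    have hgrad : ∀ k : ℕ, ‖fderiv ℝ (fun z => (1/2 : ℝ) * ‖F z - v‖ ^ 2) (zs k)‖
        ≤ 1 / ((k:ℝ)+1) := by
      intro k
      have h : HasFDerivAt (fun z => (1/2 : ℝ) * ‖F z - v‖ ^ 2)
          (fderiv ℝ (fun z => (1/2 : ℝ) * ‖F z - v‖ ^ 2) (zs k)) (zs k) := by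
        have h := hasFDerivAt_phi F hF v (zs k)
        rwa [← fderiv_phi F hF v (zs k)] at h
      exact norm_fderiv_le_of_min _ _ _ h _ (by positivity) (hz2 k)
    have htend : Tendsto (fun k => fderiv ℝ (fun z => (1/2 : ℝ) * ‖F z - v‖ ^ 2) (zs k))
        atTop (nhds 0) := squeeze_zero_norm hgrad hten
    obtain ⟨zbar, -, hcrit⟩ := hPS v zs
      ⟨(1/2 : ℝ) * ‖F 0 - v‖ ^ 2, fun k => by
        rw [abs_of_nonneg (hφ0 v (zs k))]; exact hz1 k⟩ htend
    exact ⟨zbar, crit_solves F hF hlin v zbar hcrit⟩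
  -- Injectivity
  have hinj : Function.Injective F := by
    intro a b hab
    by_contra hne
    set v : V := F a with hv
    obtain ⟨r, ρ, hr, hρ, hrb, hmt⟩ := mountain_geometry F hF hlin a b hne
    set α : ℝ := ρ ^ 2 / 2 with hα
    have hαpos : 0 < α := by positivity
    -- the path space
    set ΓS : Set C(unitInterval, Z) := {γ | γ 0 = a ∧ γ 1 = b} with hΓS
    have hclosed : IsClosed ΓS := by
      apply IsClosed.inter
      · exact isClosed_singleton.preimage (continuous_eval_const 0)
      · exact isClosed_singleton.preimage (continuous_eval_const 1)
    haveI : CompleteSpace ΓS := hclosed.completeSpace_coe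
    -- the functional on paths
    set If : ΓS → ℝ := fun γ => sSup (Set.range fun t => (1/2 : ℝ) * ‖F (γ.1 t) - v‖ ^ 2)
      with hIf
    have hbddr : ∀ γ : C(unitInterval, Z),
        BddAbove (Set.range fun t => (1/2 : ℝ) * ‖F (γ t) - v‖ ^ 2) := by
      intro γ
      exact (isCompact_range ((hφc v).comp γ.continuous)).bddAbove
    have hIfnn : ∀ γ : ΓS, 0 ≤ If γ := by
      intro γ
      exact le_csSup_of_le (hbddr γ.1) ⟨0, rfl⟩ (hφ0 v _)
    have hlsc : LowerSemicontinuous If := by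
      intro γ y hy
      simp only [hIf] at hy
      have hne : (Set.range fun t => (1/2 : ℝ) * ‖F (γ.1 t) - v‖ ^ 2).Nonempty :=
        ⟨_, ⟨0, rfl⟩⟩
      obtain ⟨x, ⟨t, rfl⟩, hx⟩ := exists_lt_of_lt_csSup hne hy
      have hev : Continuous fun γ' : ΓS => (1/2 : ℝ) * ‖F (γ'.1 t) - v‖ ^ 2 :=
        (hφc v).comp ((continuous_eval_const t).comp continuous_subtype_val)
      have hop : IsOpen {γ' : ΓS | y < (1/2 : ℝ) * ‖F (γ'.1 t) - v‖ ^ 2} :=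
        isOpen_lt continuous_const hev
      filter_upwards [hop.mem_nhds hx] with γ' hγ'
      exact lt_of_lt_of_le hγ' (le_csSup (hbddr γ'.1) ⟨t, rfl⟩)
    -- every path crosses the mountain ridge
    have hcross : ∀ γ : ΓS, α ≤ If γ := by
      intro γ
      obtain ⟨h0, h1⟩ := γ.2
      set f : ℝ → ℝ := fun x => ‖γ.1 (projIcc 0 1 zero_le_one x) - a‖ with hf
      have hfc : Continuous f :=
        ((γ.1.continuous.comp continuous_projIcc).sub continuous_const).norm
      have hf0 : f 0 = 0 := by
        simp only [hf, projIcc_left, Icc.mk_zero, h0, sub_self, norm_zero]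
      have hf1 : f 1 = ‖b - a‖ := by
        simp only [hf, projIcc_right, Icc.mk_one, h1]
      have hmem : r ∈ Icc (f 0) (f 1) := by
        rw [hf0, hf1]; exact ⟨hr.le, hrb.le⟩
      obtain ⟨x, -, hfx⟩ := intermediate_value_Icc zero_le_one hfc.continuousOn hmem
      set t : unitInterval := projIcc 0 1 zero_le_one x with ht
      have hφt : α ≤ (1/2 : ℝ) * ‖F (γ.1 t) - v‖ ^ 2 := by
        have := hmt (γ.1 t) hfx
        rw [hα, hv]
        nlinarith [norm_nonneg (F (γ.1 t) - F a)]
      exact le_trans hφt (le_csSup (hbddr γ.1) ⟨t, rfl⟩)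
    -- the straight path
    have hcont0 : Continuous fun t : unitInterval => a + (t : ℝ) • (b - a) :=
      continuous_const.add ((continuous_subtype_val).smul continuous_const)
    set γ₀ : ΓS := ⟨⟨fun t => a + (t : ℝ) • (b - a), hcont0⟩, by
      constructor
      · show a + ((0 : unitInterval) : ℝ) • (b - a) = a
        norm_num
      · show a + ((1 : unitInterval) : ℝ) • (b - a) = b
        norm_num⟩ with hγ₀
    -- the Palais-Smale sequence
    have hseq : ∀ n : ℕ, ∃ z : Z,
        (3/4) * α ≤ (1/2 : ℝ) * ‖F z - v‖ ^ 2 ∧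
        (1/2 : ℝ) * ‖F z - v‖ ^ 2 ≤ If γ₀ ∧
        ‖fderiv ℝ (fun z => (1/2 : ℝ) * ‖F z - v‖ ^ 2) z‖ ≤ 3 * (1 / ((n:ℝ)+1)) := by
      intro n
      set ε : ℝ := min (α/4) (1 / ((n:ℝ)+1)) with hε
      have hεpos : 0 < ε := lt_min (by linarith) (by positivity)
      obtain ⟨γn, hγn1, hγn2⟩ := my_ekeland If hlsc 0 hIfnn ε hεpos γ₀
      have h2ε : 2 * ε < If γn := by
        have h1 : ε ≤ α/4 := min_le_left _ _
        have := hcross γn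
        linarith
      have heke : ∀ γ' : C(unitInterval, Z), γ' 0 = γn.1 0 → γ' 1 = γn.1 1 →
          If γn ≤ sSup (Set.range fun t => (1/2 : ℝ) * ‖F (γ' t) - v‖ ^ 2)
            + ε * dist γ' γn.1 := by
        intro γ' h0 h1
        have hmemΓ : γ' ∈ ΓS := by
          rw [hΓS]
          exact ⟨h0.trans γn.2.1, h1.trans γn.2.2⟩
        have := hγn2 ⟨γ', hmemΓ⟩
        rwa [Subtype.dist_eq] at this
      have hend0 : (1/2 : ℝ) * ‖F (γn.1 0) - v‖ ^ 2 = 0 := by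
        rw [γn.2.1, hv]
        simp
      have hend1 : (1/2 : ℝ) * ‖F (γn.1 1) - v‖ ^ 2 = 0 := by
        rw [γn.2.2, hab]
        simp
      obtain ⟨t, hta, htb⟩ := minimax_step (fun z => (1/2 : ℝ) * ‖F z - v‖ ^ 2)
        (fun z => (innerSL ℝ (F z - v)).comp (fderiv ℝ F z))
        (hasFDerivAt_phi F hF v) (continuous_phi' F hF v) γn.1
        hend0 hend1
        ε hεpos (If γn) rfl h2ε heke
      refine ⟨γn.1 t, ?_, ?_, ?_⟩
      · have h1 : ε ≤ α/4 := min_le_left _ _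
        have := hcross γn
        linarith
      · have hle : (1/2 : ℝ) * ‖F (γn.1 t) - v‖ ^ 2 ≤ If γn :=
          le_csSup (hbddr γn.1) ⟨t, rfl⟩
        linarith
      · rw [fderiv_phi F hF v]
        have h2 : ε ≤ 1 / ((n:ℝ)+1) := min_le_right _ _
        linarith
    choose zs hzs1 hzs2 hzs3 using hseq
    have htend : Tendsto (fun k => fderiv ℝ (fun z => (1/2 : ℝ) * ‖F z - v‖ ^ 2) (zs k))
        atTop (nhds 0) := by
      apply squeeze_zero_norm hzs3
      have : Tendsto (fun n : ℕ => 3 * (1 / ((n:ℝ) + 1))) atTop (nhds (3 * 0)) :=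
        hten.const_mul 3
      simpa using this
    obtain ⟨zbar, hzbar, hcrit⟩ := hPS v zs
      ⟨If γ₀, fun k => by rw [abs_of_nonneg (hφ0 v (zs k))]; exact hzs2 k⟩ htend
    have hFz : F zbar = v := crit_solves F hF hlin v zbar hcrit
    have hge : (3/4) * α ≤ (1/2 : ℝ) * ‖F zbar - v‖ ^ 2 := by
      have hsub : Set.range zs ⊆ {z : Z | (3/4) * α ≤ (1/2 : ℝ) * ‖F z - v‖ ^ 2} := by
        rintro _ ⟨k, rfl⟩; exact hzs1 k
      have hcl : IsClosed {z : Z | (3/4) * α ≤ (1/2 : ℝ) * ‖F z - v‖ ^ 2} :=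
        isClosed_le continuous_const (hφc v)
      exact closure_minimal hsub hcl hzbar
    rw [hFz] at hge
    simp only [sub_self, norm_zero] at hge
    nlinarith
  refine ⟨⟨hinj, hsurj⟩, fun v => ?_⟩
  obtain ⟨z, hz⟩ := hsurj v
  exact ⟨z, hz, fun y hy => hinj (hy.trans hz.symm)⟩
end
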